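/- arXiv:1808.00851 — 7 statements merged into one kernel-verified Lean document; each statement's English description precedes it below -/
import Mathlib

section
/- Let 0 < ζ < 1 and let H be a graph that has no ζ-sparse cut. Then for every set R ⊆ V(H) with |R| ≤ (ζ/6)·|V(H)| and every pair of distinct vertices x, y ∈ V(H) \ R, there exists a path in H − R (the subgraph induced on V(H) \ R) of length at most 3/ζ with ends x and y. -/
open SimpleGraph

/-- The number of edges of `G` with one end in `X` and one end in `Y`
(intended for disjoint `X`, `Y`). -/
noncomputable def ebtw {V : Type*} (G : SimpleGraph V) (X Y : Set V) : ℕ :=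
  {e : Sym2 V | e ∈ G.edgeSet ∧ ∃ x ∈ X, ∃ y ∈ Y, e = s(x, y)}.ncard

/-- `A` has an `α`-sparse cut in `G`. -/
def HasSparseCut {V : Type*} (G : SimpleGraph V) (A : Set V) (α : ℝ) : Prop :=
  ∃ X Y : Set V, X ∪ Y = A ∧ Disjoint X Y ∧ X.Nonempty ∧ Y.Nonempty ∧
    (ebtw G X Y : ℝ) ≤ α * X.ncard * Y.ncard

/-- Ball of radius `i` around `a` in `H − R`, as a subset of `V`. -/
def ballR {V : Type} (H : SimpleGraph V) (R : Set V) (a : ↥Rᶜ) (i : ℕ) : Set V :=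
  {v | ∃ h : v ∈ Rᶜ, ∃ w : (H.induce Rᶜ).Walk a ⟨v, h⟩, w.length ≤ i}

lemma ballR_subset {V : Type} (H : SimpleGraph V) (R : Set V) (a : ↥Rᶜ) (i : ℕ) :
    ballR H R a i ⊆ Rᶜ := fun _ hv => hv.1

lemma self_mem_ballR {V : Type} (H : SimpleGraph V) (R : Set V) (a : ↥Rᶜ) (i : ℕ) :
    (a : V) ∈ ballR H R a i :=
  ⟨a.2, by exact ⟨SimpleGraph.Walk.nil.copy rfl (by simp), by simp⟩⟩

lemma ballR_mono {V : Type} (H : SimpleGraph V) (R : Set V) (a : ↥Rᶜ) {i j : ℕ} (h : i ≤ j) :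
    ballR H R a i ⊆ ballR H R a j := by
  rintro v ⟨hv, w, hw⟩
  exact ⟨hv, w, hw.trans h⟩

lemma adj_ballR {V : Type} {H : SimpleGraph V} {R : Set V} {a : ↥Rᶜ} {i : ℕ} {u v : V}
    (hu : u ∈ ballR H R a i) (hadj : H.Adj u v) (hv : v ∈ Rᶜ) : v ∈ ballR H R a (i + 1) := by
  obtain ⟨hu', w, hw⟩ := hu
  have hadj' : (H.induce Rᶜ).Adj ⟨u, hu'⟩ ⟨v, hv⟩ := by simpa [comap_adj] using hadj
  exact ⟨hv, w.concat hadj', by rw [SimpleGraph.Walk.length_concat]; omega⟩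

lemma ebtw_le_mul {V : Type} [Fintype V] (G : SimpleGraph V) (X Y : Set V) :
    ebtw G X Y ≤ X.ncard * Y.ncard := by
  have hsub : {e : Sym2 V | e ∈ G.edgeSet ∧ ∃ x ∈ X, ∃ y ∈ Y, e = s(x, y)} ⊆
      (fun p : V × V => s(p.1, p.2)) '' (X ×ˢ Y) := by
    rintro e ⟨-, a, ha, b, hb, rfl⟩
    exact ⟨(a, b), ⟨ha, hb⟩, rfl⟩
  calc ebtw G X Y ≤ ((fun p : V × V => s(p.1, p.2)) '' (X ×ˢ Y)).ncard :=
        Set.ncard_le_ncard hsub (Set.toFinite _)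
    _ ≤ (X ×ˢ Y).ncard := Set.ncard_image_le (Set.toFinite _)
    _ = X.ncard * Y.ncard := by
        rw [← Nat.card_coe_set_eq, ← Nat.card_coe_set_eq, ← Nat.card_coe_set_eq,
          ← Nat.card_prod]
        exact Nat.card_congr (Equiv.Set.prod X Y)

lemma ball_growth {V : Type} [Fintype V] {H : SimpleGraph V} {ζ : ℝ}
    (hnc : ¬ HasSparseCut H Set.univ ζ) (R : Set V) (a : ↥Rᶜ) (i : ℕ)
    (hne : (ballR H R a i)ᶜ.Nonempty) :
    ζ * ((Fintype.card V : ℝ) - (ballR H R a i).ncard) - R.ncard ≤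
      ((ballR H R a (i + 1)).ncard : ℝ) - (ballR H R a i).ncard := by
  set B := ballR H R a i with hB
  set B' := ballR H R a (i + 1) with hB'
  have hBB' : B ⊆ B' := ballR_mono H R a (Nat.le_succ i)
  have hBne : B.Nonempty := ⟨a, self_mem_ballR H R a i⟩
  have hbpos : 0 < B.ncard := (Set.ncard_pos (Set.toFinite B)).2 hBne
  have hcut : ζ * B.ncard * Bᶜ.ncard < (ebtw H B Bᶜ : ℝ) := by
    by_contra h
    push_neg at h
    exact hnc ⟨B, Bᶜ, Set.union_compl_self B, disjoint_compl_right, hBne, hne, h⟩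
  set T := (B' \ B) ∪ R with hT
  have hsub : {e : Sym2 V | e ∈ H.edgeSet ∧ ∃ u ∈ B, ∃ v ∈ Bᶜ, e = s(u, v)} ⊆
      {e : Sym2 V | e ∈ H.edgeSet ∧ ∃ u ∈ B, ∃ v ∈ T, e = s(u, v)} := by
    rintro e ⟨he, u, hu, v, hv, rfl⟩
    refine ⟨he, u, hu, v, ?_, rfl⟩
    have hadj : H.Adj u v := he
    by_cases hvR : v ∈ R
    · exact Or.inr hvR
    · exact Or.inl ⟨adj_ballR hu hadj hvR, hv⟩
  have h1 : (ebtw H B Bᶜ : ℝ) ≤ (ebtw H B T : ℝ) := by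
    exact_mod_cast Nat.cast_le.2 (Set.ncard_le_ncard hsub (Set.toFinite _))
  have h2 : (ebtw H B T : ℝ) ≤ (B.ncard : ℝ) * T.ncard := by
    exact_mod_cast Nat.cast_le.2 (ebtw_le_mul H B T)
  have h3 : (T.ncard : ℝ) ≤ (B'.ncard : ℝ) - B.ncard + R.ncard := by
    have hd : (B' \ B).ncard = B'.ncard - B.ncard := Set.ncard_diff hBB' (Set.toFinite _)
    have hle : B.ncard ≤ B'.ncard := Set.ncard_le_ncard hBB' (Set.toFinite _)
    have := Set.ncard_union_le (B' \ B) R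
    push_cast [hT]
    calc ((((B' \ B) ∪ R).ncard : ℝ)) ≤ ((B' \ B).ncard : ℝ) + R.ncard := by exact_mod_cast this
      _ = (B'.ncard : ℝ) - B.ncard + R.ncard := by
          rw [hd]; push_cast [Nat.cast_sub hle]; ring
  have hcompl : (Bᶜ.ncard : ℝ) = (Fintype.card V : ℝ) - B.ncard := by
    have := Set.ncard_add_ncard_compl B
    have h' : B.ncard + Bᶜ.ncard = Fintype.card V := by rw [this, Nat.card_eq_fintype_card]
    push_cast [← h']; ring
  have hkey : ζ * B.ncard * ((Fintype.card V : ℝ) - B.ncard) <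
      (B.ncard : ℝ) * ((B'.ncard : ℝ) - B.ncard + R.ncard) := by
    rw [← hcompl]
    calc ζ * B.ncard * Bᶜ.ncard < (ebtw H B Bᶜ : ℝ) := hcut
      _ ≤ (ebtw H B T : ℝ) := h1
      _ ≤ (B.ncard : ℝ) * T.ncard := h2
      _ ≤ (B.ncard : ℝ) * ((B'.ncard : ℝ) - B.ncard + R.ncard) :=
          mul_le_mul_of_nonneg_left h3 (by positivity)
  have hbpos' : (0 : ℝ) < B.ncard := by exact_mod_cast hbpos
  nlinarith [hkey, hbpos']

lemma ball_lb {V : Type} [Fintype V] {H : SimpleGraph V} {ζ : ℝ} (hζ0 : 0 < ζ) (hζ1 : ζ < 1)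
    (hnc : ¬ HasSparseCut H Set.univ ζ) (R : Set V) (a : ↥Rᶜ)
    (hc1 : 1 ≤ (Fintype.card V : ℝ) - R.ncard / ζ) : ∀ i : ℕ,
    ((Fintype.card V : ℝ) - R.ncard / ζ) +
      (1 - ζ) ^ i * (1 - ((Fintype.card V : ℝ) - R.ncard / ζ)) ≤ (ballR H R a i).ncard := by
  set N := (Fintype.card V : ℝ)
  set r := (R.ncard : ℝ)
  set c := N - r / ζ with hcdef
  have hq0 : (0:ℝ) ≤ 1 - ζ := by linarith
  have hcN : c ≤ N := by
    have : 0 ≤ r / ζ := by positivity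
    simp [hcdef]; linarith
  have hzc : ζ * c = ζ * N - r := by
    rw [hcdef, mul_sub]; congr 1; field_simp
  intro i
  induction i with
  | zero =>
    have hmem : (a : V) ∈ ballR H R a 0 := self_mem_ballR H R a 0
    have : 0 < (ballR H R a 0).ncard := (Set.ncard_pos (Set.toFinite _)).2 ⟨_, hmem⟩
    have h' : (1:ℝ) ≤ ((ballR H R a 0).ncard : ℝ) := by exact_mod_cast this
    simpa using h'
  | succ i ih =>
    by_cases hne : (ballR H R a i)ᶜ.Nonempty
    · have hg := ball_growth hnc R a i hne
      have hqpow : (0:ℝ) ≤ (1 - ζ) ^ i := pow_nonneg hq0 i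
      calc c + (1 - ζ) ^ (i+1) * (1 - c)
          = (1 - ζ) * (c + (1 - ζ) ^ i * (1 - c)) + ζ * c := by ring
        _ = (1 - ζ) * (c + (1 - ζ) ^ i * (1 - c)) + (ζ * N - r) := by rw [hzc]
        _ ≤ (1 - ζ) * (ballR H R a i).ncard + (ζ * N - r) := by
            have := mul_le_mul_of_nonneg_left ih hq0
            linarith
        _ ≤ ((ballR H R a (i+1)).ncard : ℝ) := by linarith
    · have huniv : ballR H R a i = Set.univ := by
        rw [← Set.compl_empty_iff]
        exact Set.not_nonempty_iff_eq_empty.1 hne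
      have hsub := ballR_mono H R a (Nat.le_succ i)
      have huniv' : ballR H R a (i+1) = Set.univ := Set.eq_univ_of_univ_subset (huniv ▸ hsub)
      have hcard : ((ballR H R a (i+1)).ncard : ℝ) = N := by
        rw [huniv', Set.ncard_univ, Nat.card_eq_fintype_card]
      rw [hcard]
      have hpow1 : (1 - ζ) ^ (i+1) ≤ 1 := pow_le_one₀ hq0 (by linarith)
      nlinarith [pow_nonneg hq0 (i+1)]

lemma quad_le_pow (x : ℝ) (hx : 0 ≤ x) : ∀ t : ℕ,
    1 + t * x + (t * (t - 1)) / 2 * x ^ 2 ≤ (1 + x) ^ t := by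
  intro t
  induction t with
  | zero => norm_num
  | succ t ih =>
    have ht : (0:ℝ) ≤ (t:ℝ) := Nat.cast_nonneg t
    have hnn : (0:ℝ) ≤ (t:ℝ) * ((t:ℝ) - 1) := by
      rcases Nat.eq_zero_or_pos t with h | h
      · simp [h]
      · have : (1:ℝ) ≤ (t:ℝ) := by exact_mod_cast h
        nlinarith
    have h1 : (0:ℝ) ≤ 1 + x := by linarith
    calc (1 : ℝ) + (t+1 : ℕ) * x + ((t+1 : ℕ) * ((t+1 : ℕ) - 1)) / 2 * x ^ 2
        ≤ (1 + t * x + (t * (t - 1)) / 2 * x ^ 2) * (1 + x) := by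
          push_cast
          nlinarith [mul_nonneg hnn (pow_nonneg hx 3), mul_nonneg hnn (mul_nonneg hx hx)]
      _ ≤ (1 + x) ^ t * (1 + x) := mul_le_mul_of_nonneg_right ih h1
      _ = (1 + x) ^ (t + 1) := by ring

set_option maxHeartbeats 1000000 in
lemma Qbound {ζ : ℝ} (hζ0 : 0 < ζ) (hζ1 : ζ < 1) :
    2 * (1 - ζ) ^ (⌊3/ζ⌋₊ / 2) < (4 + ζ) / 5 := by
  set m := ⌊3/ζ⌋₊ with hm
  set t := m / 2 with ht
  have hq0 : (0:ℝ) ≤ 1 - ζ := by linarith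
  have hq1 : (1:ℝ) - ζ ≤ 1 := by linarith
  have hm3 : 3 ≤ m := by
    rw [hm]
    apply Nat.le_floor
    rw [le_div_iff₀ hζ0]; norm_num; linarith
  have ht1 : 1 ≤ t := by omega
  have hmf : 3/ζ - 1 < (m:ℝ) := by
    have := Nat.lt_floor_add_one (3/ζ)
    rw [← hm] at this; linarith
  have hm4 : ζ ≤ 3/4 → 4 ≤ m := by
    intro hB
    rw [hm]; apply Nat.le_floor
    rw [le_div_iff₀ hζ0]; norm_num; linarith
  have htm : t = m / 2 := ht
  clear_value m t
  clear hm ht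
  by_cases hA : ζ ≤ 2/5
  · have h2t : (m:ℝ) ≤ 2 * (t:ℝ) + 1 := by
      have : m ≤ 2 * t + 1 := by omega
      exact_mod_cast this
    have hu : 3/2 - ζ < (t:ℝ) * ζ := by
      have h1 : 3/ζ - 2 < 2 * (t:ℝ) := by linarith
      have h2 : (3/ζ - 2) * ζ < 2 * (t:ℝ) * ζ := mul_lt_mul_of_pos_right h1 hζ0
      have h3 : (3/ζ - 2) * ζ = 3 - 2*ζ := by field_simp
      nlinarith
    set u := (t:ℝ) * ζ with hudef
    have hu0 : 0 ≤ u := by positivity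
    have hppos : (0:ℝ) < (1+ζ)^t := by positivity
    have hqp : (1-ζ)^t * (1+ζ)^t ≤ 1 := by
      rw [← mul_pow]
      apply pow_le_one₀ (by nlinarith) (by nlinarith)
    have hquad : 1 + u + (u^2 - u*ζ)/2 ≤ (1+ζ)^t := by
      have h := quad_le_pow ζ hζ0.le t
      nlinarith [h]
    have hkey : 10 < (4 + ζ) * (1 + u + (u^2 - u*ζ)/2) := by
      have hstep1 : 10 < (4 + ζ) * (1 + (3/2 - ζ) + ((3/2 - ζ)^2 - (3/2 - ζ)*ζ)/2) := by
        nlinarith [pow_nonneg hζ0.le 3, sq_nonneg ζ, mul_pos hζ0 hζ0]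
      have hstep2 : (4 + ζ) * (1 + (3/2 - ζ) + ((3/2 - ζ)^2 - (3/2 - ζ)*ζ)/2) ≤
          (4 + ζ) * (1 + u + (u^2 - u*ζ)/2) := by
        have hd : (0:ℝ) ≤ (4 + ζ) * (u - (3/2 - ζ)) * (1 + (u + (3/2 - ζ))/2 - ζ/2) := by
          apply mul_nonneg (mul_nonneg (by linarith) (by linarith))
          nlinarith
        nlinarith [hd]
      linarith
    have h10 : 10 < (4 + ζ) * (1+ζ)^t :=
      hkey.trans_le (mul_le_mul_of_nonneg_left hquad (by linarith))
    have h5 : 2*(1-ζ)^t * ((1+ζ)^t * 5) ≤ 10 := by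
      have h := mul_le_mul_of_nonneg_left hqp (by norm_num : (0:ℝ) ≤ 10)
      calc 2*(1-ζ)^t * ((1+ζ)^t * 5) = 10 * ((1-ζ)^t * (1+ζ)^t) := by ring
        _ ≤ 10 * 1 := h
        _ = 10 := by norm_num
    have h6 : 2*(1-ζ)^t * ((1+ζ)^t * 5) < ((4+ζ)/5) * ((1+ζ)^t * 5) := by
      have : ((4+ζ)/5) * ((1+ζ)^t * 5) = (4+ζ) * (1+ζ)^t := by ring
      rw [this]; linarith
    exact lt_of_mul_lt_mul_right h6 (by positivity)
  · push_neg at hA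
    by_cases hB : ζ ≤ 3/4
    · have ht2 : 2 ≤ t := by have := hm4 hB; omega
      have hqt : (1-ζ)^t ≤ (1-ζ)^2 := pow_le_pow_of_le_one hq0 hq1 ht2
      nlinarith [hqt]
    · push_neg at hB
      have hqt : (1-ζ)^t ≤ (1-ζ)^1 := pow_le_pow_of_le_one hq0 hq1 ht1
      rw [pow_one] at hqt
      nlinarith

lemma endgame {ζ N r c Q : ℝ} (hζ0 : 0 < ζ) (hζ1 : ζ < 1) (hN : 2 ≤ N) (hr0 : 0 ≤ r)
    (hr : r ≤ ζ/6 * N) (hc : ζ * c = ζ * N - r) (hQ0 : 0 ≤ Q) (hQ : Q < (4+ζ)/5) :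
    N - r < 2*c + Q*(1-c) := by
  have key : 0 < ζ * (2*c + Q*(1-c) - (N - r)) := by
    have e1 : ζ * (2*c + Q*(1-c) - (N - r)) =
        2*(ζ*c) + Q*ζ - Q*(ζ*c) - ζ*N + ζ*r := by ring
    rw [e1, hc]
    nlinarith [mul_nonneg (by linarith : (0:ℝ) ≤ ζ/6*N - r) (by linarith : (0:ℝ) ≤ 2 - ζ - Q),
      mul_pos (by linarith : (0:ℝ) < N) (by linarith : (0:ℝ) < (4+ζ)/5 - Q), hζ0.le]
  nlinarith [key, hζ0]

/-- **Short connections avoiding a small set** (Proposition 3.2): if `H` has no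
`ζ`-sparse cut then any two vertices outside a small set `R` are joined by a path of
length at most `3/ζ` in `H − R`. -/
theorem short_connection :
    ∀ ζ : ℝ, 0 < ζ → ζ < 1 →
    ∀ (V : Type) [Fintype V] (H : SimpleGraph V),
      ¬ HasSparseCut H Set.univ ζ →
    ∀ R : Set V, (R.ncard : ℝ) ≤ ζ / 6 * Fintype.card V →
    ∀ x y : V, x ∉ R → y ∉ R → x ≠ y →
    ∃ (hx : x ∈ Rᶜ) (hy : y ∈ Rᶜ) (p : (H.induce Rᶜ).Walk ⟨x, hx⟩ ⟨y, hy⟩),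
      p.IsPath ∧ (p.length : ℝ) ≤ 3 / ζ := by
  intro ζ hζ0 hζ1 V _ H hnc R hR x y hxR hyR hxy
  classical
  have hx : x ∈ Rᶜ := hxR
  have hy : y ∈ Rᶜ := hyR
  refine ⟨hx, hy, ?_⟩
  set N := (Fintype.card V : ℝ) with hN
  have hN2 : (2:ℝ) ≤ N := by
    have : 1 < Fintype.card V := Fintype.one_lt_card_iff_nontrivial.2 ⟨⟨x, y, hxy⟩⟩
    rw [hN]; exact_mod_cast this
  have hr0 : (0:ℝ) ≤ (R.ncard : ℝ) := Nat.cast_nonneg _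
  have hc1 : 1 ≤ N - (R.ncard : ℝ) / ζ := by
    have hdiv : (R.ncard : ℝ) / ζ ≤ N / 6 := by
      rw [div_le_iff₀ hζ0]
      calc (R.ncard : ℝ) ≤ ζ/6 * N := hR
        _ = N / 6 * ζ := by ring
    linarith
  set m := ⌊3/ζ⌋₊ with hm
  set t := m / 2 with ht
  set s := m - t with hs
  have hts : t ≤ s := by omega
  have hstm : s + t = m := by omega
  set q := (1 - ζ) with hq
  have hq0 : (0:ℝ) ≤ q := by rw [hq]; linarith
  have hq1 : q ≤ 1 := by rw [hq]; linarith
  set xx : ↥Rᶜ := ⟨x, hx⟩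
  set yy : ↥Rᶜ := ⟨y, hy⟩
  have hbx := ball_lb hζ0 hζ1 hnc R xx hc1 s
  have hby := ball_lb hζ0 hζ1 hnc R yy hc1 t
  -- the two balls intersect
  have hnd : ¬ Disjoint (ballR H R xx s) (ballR H R yy t) := by
    intro hd
    have hsum : (ballR H R xx s).ncard + (ballR H R yy t).ncard ≤ Rᶜ.ncard := by
      rw [← Set.ncard_union_eq hd (Set.toFinite _) (Set.toFinite _)]
      exact Set.ncard_le_ncard
        (Set.union_subset (ballR_subset H R xx s) (ballR_subset H R yy t)) (Set.toFinite _)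
    have hRc : (Rᶜ.ncard : ℝ) = N - R.ncard := by
      have h' : R.ncard + Rᶜ.ncard = Fintype.card V := by
        rw [Set.ncard_add_ncard_compl, Nat.card_eq_fintype_card]
      rw [hN]; push_cast [← h']; ring
    have hsum' : ((ballR H R xx s).ncard : ℝ) + (ballR H R yy t).ncard ≤ N - R.ncard := by
      rw [← hRc]; exact_mod_cast hsum
    -- lower bound via endgame
    set c := N - (R.ncard : ℝ) / ζ with hc
    have hzc : ζ * c = ζ * N - R.ncard := by
      rw [hc]; field_simp
    have hqs : q ^ s ≤ q ^ t := pow_le_pow_of_le_one hq0 hq1 hts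
    have hQb : q ^ s + q ^ t < (4 + ζ)/5 := by
      have h2 := Qbound hζ0 hζ1
      rw [← hm, ← ht, ← hq] at h2
      have : q ^ s + q ^ t ≤ 2 * q ^ t := by linarith
      linarith
    have hQ0 : 0 ≤ q ^ s + q ^ t := by positivity
    have hend := endgame hζ0 hζ1 hN2 hr0 hR hzc hQ0 hQb
    -- 2c + (q^s + q^t)(1−c) ≤ bx + by ≤ N − r, contradiction
    have hlb : 2*c + (q ^ s + q ^ t)*(1 - c) ≤
        ((ballR H R xx s).ncard : ℝ) + (ballR H R yy t).ncard := by
      have h1 : c + q ^ s * (1 - c) ≤ ((ballR H R xx s).ncard : ℝ) := hbx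
      have h2 : c + q ^ t * (1 - c) ≤ ((ballR H R yy t).ncard : ℝ) := hby
      nlinarith [h1, h2]
    linarith
  obtain ⟨z, hz1, hz2⟩ := Set.not_disjoint_iff.1 hnd
  obtain ⟨hzc, w1, hw1⟩ := hz1
  obtain ⟨hzc', w2, hw2⟩ := hz2
  let w : (H.induce Rᶜ).Walk xx yy := w1.append w2.reverse
  refine ⟨w.bypass, w.bypass_isPath, ?_⟩
  have hlen : w.bypass.length ≤ s + t := by
    calc w.bypass.length ≤ w.length := SimpleGraph.Walk.length_bypass_le w
      _ = w1.length + w2.reverse.length := SimpleGraph.Walk.length_append _ _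
      _ = w1.length + w2.length := by rw [SimpleGraph.Walk.length_reverse]
      _ ≤ s + t := Nat.add_le_add hw1 hw2
  have hm3 : ((m:ℕ) : ℝ) ≤ 3/ζ := by
    rw [hm]; exact Nat.floor_le (by positivity)
  calc (w.bypass.length : ℝ) ≤ ((s + t : ℕ) : ℝ) := by exact_mod_cast hlen
    _ = ((m : ℕ) : ℝ) := by rw [hstm]
    _ ≤ 3/ζ := hm3
end

section
/- Let 0 < ζ < 1 and let H be a graph that has no ζ-sparse cut. Then for every set R ⊆ V(H) with |R| ≤ (ζ/6)·|V(H)| and R ≠ V(H), the induced subgraph H − R on V(H) \ R is connected. -/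
open SimpleGraph

lemma ncard_prod_aux {V : Type} [Fintype V] (R B : Set V) :
    (R ×ˢ B).ncard = R.ncard * B.ncard := by
  rw [← Nat.card_coe_set_eq, ← Nat.card_coe_set_eq, ← Nat.card_coe_set_eq,
    Nat.card_congr (Equiv.Set.prod R B), Nat.card_prod]

lemma key_lemma {V : Type} [Fintype V] (H : SimpleGraph V) (ζ : ℝ) (hζ : 0 < ζ) (hζ1 : ζ < 1)
    (R A B : Set V) (hAB : A ∪ B = Rᶜ) (hdisj : Disjoint A B)
    (hA : A.Nonempty) (hB : B.Nonempty)
    (hedge : ∀ a ∈ A, ∀ b ∈ B, ¬ H.Adj a b)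
    (hcard : (B.ncard : ℝ) ≤ (A.ncard : ℝ))
    (hR : (R.ncard : ℝ) ≤ ζ / 6 * Fintype.card V) :
    HasSparseCut H Set.univ ζ := by
  have hAR : A ⊆ Rᶜ := hAB ▸ Set.subset_union_left
  have hBR : B ⊆ Rᶜ := hAB ▸ Set.subset_union_right
  refine ⟨A ∪ R, B, ?_, ?_, hA.inl, hB, ?_⟩
  · rw [Set.union_right_comm, hAB, Set.compl_union_self]
  · exact Set.disjoint_union_left.2 ⟨hdisj,
      Set.disjoint_left.2 fun x hxR hxB => hBR hxB hxR⟩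
  · -- bound ebtw
    have hsub : {e : Sym2 V | e ∈ H.edgeSet ∧ ∃ x ∈ A ∪ R, ∃ y ∈ B, e = s(x, y)}
        ⊆ (fun p : V × V => s(p.1, p.2)) '' (R ×ˢ B) := by
      rintro e ⟨he, x, hx, y, hy, rfl⟩
      have hadj : H.Adj x y := H.mem_edgeSet.1 he
      rcases hx with hx | hx
      · exact absurd hadj (hedge x hx y hy)
      · exact ⟨(x, y), ⟨hx, hy⟩, rfl⟩
    have h1 : ebtw H (A ∪ R) B ≤ R.ncard * B.ncard := by
      calc ebtw H (A ∪ R) B ≤ ((fun p : V × V => s(p.1, p.2)) '' (R ×ˢ B)).ncard :=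
            Set.ncard_le_ncard hsub (Set.toFinite _)
        _ ≤ (R ×ˢ B).ncard := Set.ncard_image_le (Set.toFinite _)
        _ = R.ncard * B.ncard := ncard_prod_aux R B
    -- arithmetic
    have hXcard : ((A ∪ R).ncard : ℝ) = A.ncard + R.ncard := by
      rw [Set.ncard_union_eq (Set.disjoint_left.2 fun x hx hxR => hAR hx hxR)
        (Set.toFinite _) (Set.toFinite _)]
      push_cast; ring
    have hn : (Fintype.card V : ℝ) = A.ncard + B.ncard + R.ncard := by
      have h2 : (A ∪ B).ncard + R.ncard = Fintype.card V := by
        have := Set.ncard_add_ncard_compl R (Set.toFinite _) (Set.toFinite _)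
        rw [hAB, ← Nat.card_eq_fintype_card]; omega
      rw [← h2, Set.ncard_union_eq hdisj (Set.toFinite _) (Set.toFinite _)]
      push_cast; ring
    have hRX : (R.ncard : ℝ) ≤ ζ * ((A ∪ R).ncard) := by
      have hB0 : (0:ℝ) ≤ B.ncard := Nat.cast_nonneg _
      have hR0 : (0:ℝ) ≤ R.ncard := Nat.cast_nonneg _
      calc (R.ncard : ℝ) ≤ ζ / 6 * Fintype.card V := hR
        _ = ζ / 6 * (A.ncard + B.ncard + R.ncard) := by rw [hn]
        _ ≤ ζ / 6 * (A.ncard + A.ncard + R.ncard) := by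
            apply mul_le_mul_of_nonneg_left _ (by positivity)
            linarith
        _ ≤ ζ * (A.ncard + R.ncard) := by nlinarith [Nat.cast_nonneg (α := ℝ) A.ncard]
        _ = ζ * ((A ∪ R).ncard) := by rw [hXcard]
    calc (ebtw H (A ∪ R) B : ℝ) ≤ (R.ncard : ℝ) * B.ncard := by exact_mod_cast h1
      _ ≤ ζ * ((A ∪ R).ncard) * B.ncard :=
          mul_le_mul_of_nonneg_right hRX (Nat.cast_nonneg _)

/-- If `H` has no `ζ`-sparse cut and `R` is a small proper subset of the vertices,
then `H − R` is connected. -/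
theorem connected_after_removal :
    ∀ ζ : ℝ, 0 < ζ → ζ < 1 →
    ∀ (V : Type) [Fintype V] (H : SimpleGraph V),
      ¬ HasSparseCut H Set.univ ζ →
    ∀ R : Set V, (R.ncard : ℝ) ≤ ζ / 6 * Fintype.card V → R ≠ Set.univ →
      (H.induce Rᶜ).Connected := by
  intro ζ hζ hζ1 V _ H hno R hR hRne
  by_contra hcon
  -- Rᶜ is nonempty
  obtain ⟨v, hv⟩ : ∃ v : V, v ∈ Rᶜ := by
    by_contra h
    push_neg at h
    exact hRne (Set.eq_univ_of_forall fun x => by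
      by_contra hx; exact (h x) hx)
  have hne : Nonempty ↥(Rᶜ : Set V) := ⟨⟨v, hv⟩⟩
  rw [connected_iff] at hcon
  push_neg at hcon
  obtain ⟨u, w, huw⟩ : ∃ u w : ↥(Rᶜ : Set V), ¬ (H.induce Rᶜ).Reachable u w := by
    by_contra h
    push_neg at h
    exact (not_nonempty_iff.mpr (hcon fun u w => h u w)) hne
  set A : Set V := {x : V | ∃ h : x ∈ Rᶜ, (H.induce Rᶜ).Reachable u ⟨x, h⟩} with hAdef
  set B : Set V := Rᶜ \ A with hBdef
  have hAsub : A ⊆ Rᶜ := fun x hx => hx.1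
  have hAB : A ∪ B = Rᶜ := Set.union_diff_cancel' (fun _ h => h) hAsub
  have hdisj : Disjoint A B := Set.disjoint_sdiff_right.mono_left le_rfl
  have hA : A.Nonempty := ⟨u.1, u.2, by exact Reachable.refl _⟩
  have hB : B.Nonempty := ⟨w.1, w.2, fun h => huw (h.2)⟩
  have hedge : ∀ a ∈ A, ∀ b ∈ B, ¬ H.Adj a b := by
    rintro a ⟨ha, hra⟩ b hb hadj
    have hbmem : b ∈ Rᶜ := hb.1
    have : (H.induce Rᶜ).Adj ⟨a, ha⟩ ⟨b, hbmem⟩ := hadj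
    exact hb.2 ⟨hbmem, hra.trans this.reachable⟩
  rcases le_total ((B.ncard : ℝ)) ((A.ncard : ℝ)) with h | h
  · exact hno (key_lemma H ζ hζ hζ1 R A B hAB hdisj hA hB hedge h hR)
  · exact hno (key_lemma H ζ hζ hζ1 R B A (Set.union_comm A B ▸ hAB) hdisj.symm hB hA
      (fun b hb a ha hadj => hedge a ha b hb hadj.symm) h hR)
end

section
/- Let H be a bipartite graph with vertex classes X and Y whose vertex set is partitioned into sets U₁, …, U_k. Suppose M is a matching in H that balances U_i for every i ∈ [k], i.e., |(U_i ∩ X) \ V(M)| = |(U_i ∩ Y) \ V(M)| for every i. Then M contains a sub-matching M' ⊆ M with at most (disb(U₁) + ⋯ + disb(U_k))·k/2 edges that balances U_i for every i ∈ [k], where disb(U) = ||U ∩ X| − |U ∩ Y||. -/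
open SimpleGraph Finset


private lemma shift_count {β : Type*} [DecidableEq β] (p : ℕ) (hp : 0 < p) (y : ℕ → β)
    (hy : y p = y 0) (x : β) :
    ((Finset.range p).filter fun t => y t = x).card
      = ((Finset.range p).filter fun t => y (t + 1) = x).card := by
  apply Finset.card_bij' (i := fun t _ => (t + p - 1) % p) (j := fun t _ => (t + 1) % p)
  · intro t ht
    simp only [mem_filter, mem_range] at ht ⊢
    refine ⟨Nat.mod_lt _ hp, ?_⟩
    rcases Nat.eq_zero_or_pos t with rfl | htpos
    · have h1 : (0 + p - 1) % p = p - 1 := by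
        rw [Nat.zero_add, Nat.mod_eq_of_lt (by omega)]
      rw [h1, Nat.sub_add_cancel hp, hy]
      exact ht.2
    · have h1 : (t + p - 1) % p = t - 1 := by
        have : t + p - 1 = (t - 1) + p := by omega
        rw [this, Nat.add_mod_right, Nat.mod_eq_of_lt (by omega)]
      rw [h1, Nat.sub_add_cancel htpos]
      exact ht.2
  · intro t ht
    simp only [mem_filter, mem_range] at ht ⊢
    refine ⟨Nat.mod_lt _ hp, ?_⟩
    rcases Nat.lt_or_ge (t + 1) p with h | h
    · rw [Nat.mod_eq_of_lt h]; exact ht.2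
    · have : t + 1 = p := by omega
      rw [this, Nat.mod_self, ← hy, ← this]; exact ht.2
  · intro t ht
    simp only [mem_filter, mem_range] at ht
    rcases Nat.eq_zero_or_pos t with rfl | htpos
    · have h1 : (0 + p - 1) % p = p - 1 := by
        rw [Nat.zero_add, Nat.mod_eq_of_lt (by omega)]
      rw [h1, Nat.sub_add_cancel hp, Nat.mod_self]
    · have h1 : (t + p - 1) % p = t - 1 := by
        have : t + p - 1 = (t - 1) + p := by omega
        rw [this, Nat.add_mod_right, Nat.mod_eq_of_lt (by omega)]
      rw [h1, Nat.sub_add_cancel htpos, Nat.mod_eq_of_lt ht.1]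
  · intro t ht
    simp only [mem_filter, mem_range] at ht
    rcases Nat.lt_or_ge (t + 1) p with h | h
    · rw [Nat.mod_eq_of_lt h]
      have : t + 1 + p - 1 = t + p := by omega
      rw [this, Nat.add_mod_right, Nat.mod_eq_of_lt ht.1]
    · have h2 : t + 1 = p := by omega
      rw [h2, Nat.mod_self, Nat.zero_add, Nat.mod_eq_of_lt (by omega)]
      omega

private lemma exists_balanced_of_cycle {α : Type*} [DecidableEq α] {k : ℕ} (f g : α → Fin k)
    (E : Finset α) (i : Fin k)
    (hcyc : Relation.TransGen (fun a b => ∃ e ∈ E, f e = a ∧ g e = b) i i) :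
    ∃ C ⊆ E, C.Nonempty ∧
      ∀ x, (C.filter fun e => f e = x).card = (C.filter fun e => g e = x).card := by
  classical
  set r : Fin k → Fin k → Prop := fun a b => ∃ e ∈ E, f e = a ∧ g e = b with hr
  set Z : Set (Fin k) := {j | Relation.TransGen r i j ∧ Relation.TransGen r j i} with hZ
  have hiZ : i ∈ Z := ⟨hcyc, hcyc⟩
  have hstep : ∀ j, ∃ j', j ∈ Z → r j j' ∧ j' ∈ Z := by
    intro j
    by_cases hj : j ∈ Z
    · obtain ⟨b, hjb, hbi⟩ := Relation.TransGen.head'_iff.mp hj.2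
      refine ⟨b, fun _ => ⟨hjb, ?_, ?_⟩⟩
      · exact hj.1.tail hjb
      · rcases Relation.reflTransGen_iff_eq_or_transGen.mp hbi with rfl | h
        · exact hcyc
        · exact h
    · exact ⟨j, fun h => absurd h hj⟩
  choose σ hσ using hstep
  have horbit : ∀ t, σ^[t] i ∈ Z := by
    intro t
    induction t with
    | zero => exact hiZ
    | succ n ih => rw [Function.iterate_succ_apply']; exact (hσ _ ih).2
  -- find a repeat among iterates
  have hnotinj : ¬ Function.Injective (fun t : Fin (k + 1) => σ^[(t : ℕ)] i) := by
    intro hinj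
    have := Fintype.card_le_of_injective _ hinj
    simp [Fintype.card_fin] at this
  rw [Function.not_injective_iff] at hnotinj
  obtain ⟨a, b, hab, hne⟩ := hnotinj
  -- wlog a > b
  obtain ⟨m, n, hmn, heq⟩ : ∃ m n : ℕ, m < n ∧ σ^[m] i = σ^[n] i := by
    rcases hne.lt_or_gt with h | h
    · exact ⟨a, b, by exact_mod_cast h, hab⟩
    · exact ⟨b, a, by exact_mod_cast h, hab.symm⟩
  set x := σ^[m] i with hx
  have hper : Function.IsPeriodicPt σ (n - m) x := by
    show σ^[n - m] (σ^[m] i) = x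
    rw [← Function.iterate_add_apply, Nat.sub_add_cancel hmn.le, ← heq]
  set p := Function.minimalPeriod σ x with hpdef
  have hp : 0 < p := hper.minimalPeriod_pos (by omega)
  have hpx : σ^[p] x = x := Function.iterate_minimalPeriod
  have hinj : Set.InjOn (fun t => σ^[t] x) (Set.Iio p) :=
    Function.iterate_injOn_Iio_minimalPeriod
  have horb2 : ∀ t, σ^[t] x ∈ Z := by
    intro t
    rw [hx, ← Function.iterate_add_apply]
    exact horbit _
  have harc : ∀ t, ∃ e ∈ E, f e = σ^[t] x ∧ g e = σ^[t + 1] x := by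
    intro t
    have h := (hσ _ (horb2 t)).1
    rw [Function.iterate_succ_apply']
    exact h
  choose e he hfe hge using harc
  have heinj : Set.InjOn e ↑(Finset.range p) := by
    intro s hs t ht hst
    simp only [coe_range, Set.mem_Iio] at hs ht
    have : σ^[s] x = σ^[t] x := by rw [← hfe s, ← hfe t, hst]
    exact hinj hs ht this
  refine ⟨(Finset.range p).image e, ?_, ?_, ?_⟩
  · intro c hc
    simp only [mem_image] at hc
    obtain ⟨t, _, rfl⟩ := hc
    exact he t
  · exact (Finset.nonempty_range_iff.mpr hp.ne').image e
  · intro x'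
    rw [Finset.filter_image, Finset.filter_image,
      Finset.card_image_of_injOn (heinj.mono (by simp only [coe_filter, mem_range, coe_range]; exact fun t ht => ht.1)),
      Finset.card_image_of_injOn (heinj.mono (by simp only [coe_filter, mem_range, coe_range]; exact fun t ht => ht.1))]
    have h1 : (Finset.range p).filter (fun t => f (e t) = x')
        = (Finset.range p).filter (fun t => σ^[t] x = x') := by
      apply Finset.filter_congr; intro t _; rw [hfe]
    have h2 : (Finset.range p).filter (fun t => g (e t) = x')
        = (Finset.range p).filter (fun t => σ^[t + 1] x = x') := by
      apply Finset.filter_congr; intro t _; rw [hge]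
    rw [h1, h2]
    exact shift_count p hp (fun t => σ^[t] x) hpx x'

private lemma core {α : Type*} [DecidableEq α] {k : ℕ} (f g : α → Fin k) :
    ∀ E : Finset α, ∃ S ⊆ E,
      (∀ i, ((S.filter fun e => f e = i).card : ℤ) - ((S.filter fun e => g e = i).card : ℤ)
          = ((E.filter fun e => f e = i).card : ℤ) - ((E.filter fun e => g e = i).card : ℤ)) ∧
      2 * (S.card : ℤ) ≤ (∑ i : Fin k, |((E.filter fun e => f e = i).card : ℤ)
          - ((E.filter fun e => g e = i).card : ℤ)|) * k := by
  intro E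
  induction E using Finset.strongInduction with
  | _ E ih =>
  classical
  by_cases hcyc : ∃ i, Relation.TransGen (fun a b => ∃ e ∈ E, f e = a ∧ g e = b) i i
  · obtain ⟨i, hi⟩ := hcyc
    obtain ⟨C, hCE, hCne, hCbal⟩ := exists_balanced_of_cycle f g E i hi
    obtain ⟨S, hSE, hSeq, hSb⟩ := ih (E \ C) (Finset.sdiff_ssubset hCE hCne)
    have hfilt : ∀ (h' : α → Fin k) (i : Fin k),
        (((E \ C).filter fun e => h' e = i).card : ℤ)
          = ((E.filter fun e => h' e = i).card : ℤ)
            - ((C.filter fun e => h' e = i).card : ℤ) := by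
      intro h' i
      have h1 : (E \ C).filter (fun e => h' e = i)
          = E.filter (fun e => h' e = i) \ C.filter (fun e => h' e = i) := by
        ext a; simp only [Finset.mem_sdiff, Finset.mem_filter]; tauto
      have h2 : C.filter (fun e => h' e = i) ⊆ E.filter (fun e => h' e = i) :=
        Finset.filter_subset_filter _ hCE
      rw [h1, Finset.card_sdiff_of_subset h2]
      have := Finset.card_le_card h2
      omega
    have hsame : ∀ i : Fin k,
        (((E \ C).filter fun e => f e = i).card : ℤ)
            - (((E \ C).filter fun e => g e = i).card : ℤ)
          = ((E.filter fun e => f e = i).card : ℤ)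
            - ((E.filter fun e => g e = i).card : ℤ) := by
      intro i
      rw [hfilt f i, hfilt g i, hCbal i]
      ring
    refine ⟨S, hSE.trans (Finset.sdiff_subset), ?_, ?_⟩
    · intro i; rw [hSeq i, hsame i]
    · calc 2 * (S.card : ℤ) ≤ _ := hSb
        _ = _ := by
          congr 1
          exact Finset.sum_congr rfl fun i _ => by rw [hsame i]
  · push_neg at hcyc
    refine ⟨E, Finset.Subset.refl E, fun i => rfl, ?_⟩
    rcases E.eq_empty_or_nonempty with rfl | ⟨e₀, he₀⟩
    · simp
    have hk : 1 ≤ k := by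
      rcases Nat.eq_zero_or_pos k with rfl | h
      · exact (f e₀).elim0
      · exact h
    set r : Fin k → Fin k → Prop := fun a b => ∃ e ∈ E, f e = a ∧ g e = b with hr
    set d : Fin k → ℤ := fun i => ((E.filter fun e => f e = i).card : ℤ)
      - ((E.filter fun e => g e = i).card : ℤ) with hd
    set h : Fin k → ℕ :=
      fun i => (Finset.univ.filter fun j => Relation.TransGen r j i).card with hh
    have hmono : ∀ a b, r a b → h a < h b := by
      intro a b hab
      apply Finset.card_lt_card
      have hsub : (Finset.univ.filter fun j => Relation.TransGen r j a)
          ⊆ Finset.univ.filter fun j => Relation.TransGen r j b := by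
        intro j hj
        simp only [Finset.mem_filter, Finset.mem_univ, true_and] at hj ⊢
        exact hj.tail hab
      rw [Finset.ssubset_iff_of_subset hsub]
      refine ⟨a, ?_, ?_⟩
      · simp only [Finset.mem_filter, Finset.mem_univ, true_and]
        exact Relation.TransGen.single hab
      · simp only [Finset.mem_filter, Finset.mem_univ, true_and]
        exact hcyc a
    have hbound : ∀ i, (h i : ℤ) ≤ (k : ℤ) - 1 := by
      intro i
      have hsub : (Finset.univ.filter fun j => Relation.TransGen r j i)
          ⊆ Finset.univ.erase i := by
        intro j hj
        simp only [Finset.mem_filter, Finset.mem_univ, true_and] at hj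
        refine Finset.mem_erase.mpr ⟨?_, Finset.mem_univ j⟩
        rintro rfl
        exact hcyc j hj
      have := Finset.card_le_card hsub
      rw [Finset.card_erase_of_mem (Finset.mem_univ i), Finset.card_univ,
        Fintype.card_fin] at this
      have : h i ≤ k - 1 := this
      omega
    have hfib : ∀ h' : α → Fin k, ∑ e ∈ E, ((h (h' e) : ℤ))
        = ∑ i : Fin k, (h i : ℤ) * ((E.filter fun e => h' e = i).card : ℤ) := by
      intro h'
      rw [← Finset.sum_fiberwise_of_maps_to (fun e _ => Finset.mem_univ (h' e))
        (fun e => (h (h' e) : ℤ))]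
      refine Finset.sum_congr rfl fun i _ => ?_
      have : ∑ e ∈ E.filter (fun e => h' e = i), ((h (h' e) : ℤ))
          = ∑ _e ∈ E.filter (fun e => h' e = i), ((h i : ℤ)) :=
        Finset.sum_congr rfl fun e he => by rw [(Finset.mem_filter.mp he).2]
      rw [this, Finset.sum_const, nsmul_eq_mul, mul_comm]
    have hcards : ∀ h' : α → Fin k,
        ∑ i : Fin k, ((E.filter fun e => h' e = i).card : ℤ) = (E.card : ℤ) := by
      intro h'
      rw [Finset.card_eq_sum_card_fiberwise (f := h') (fun e _ => Finset.mem_univ (h' e))]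
      push_cast
      rfl
    have key4 : ∑ i : Fin k, d i = 0 := by
      rw [Finset.sum_sub_distrib, hcards f, hcards g, sub_self]
    have key1 : (E.card : ℤ) ≤ ∑ e ∈ E, ((h (g e) : ℤ) - (h (f e) : ℤ)) := by
      calc (E.card : ℤ) = ∑ _e ∈ E, (1 : ℤ) := by simp
        _ ≤ _ := by
          refine Finset.sum_le_sum fun e he => ?_
          have := hmono (f e) (g e) ⟨e, he, rfl, rfl⟩
          omega
    have key2 : ∑ e ∈ E, ((h (g e) : ℤ) - (h (f e) : ℤ))
        = ∑ i : Fin k, (h i : ℤ) * (-(d i)) := by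
      rw [Finset.sum_sub_distrib, hfib f, hfib g, ← Finset.sum_sub_distrib]
      refine Finset.sum_congr rfl fun i _ => ?_
      simp only [hd]
      ring
    have key3 : ∀ i : Fin k, 2 * ((h i : ℤ) * (-(d i))) ≤ ((k : ℤ) - 1) * (|d i| - d i) := by
      intro i
      have h0 : (0 : ℤ) ≤ (h i : ℤ) := Int.natCast_nonneg _
      have hb := hbound i
      rcases le_or_gt 0 (d i) with hdi | hdi
      · rw [abs_of_nonneg hdi]
        nlinarith
      · rw [abs_of_neg hdi]
        nlinarith
    have hsum3 : ∑ i : Fin k, 2 * ((h i : ℤ) * (-(d i)))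
        ≤ ∑ i : Fin k, ((k : ℤ) - 1) * (|d i| - d i) :=
      Finset.sum_le_sum fun i _ => key3 i
    have hD : ∑ i : Fin k, ((k : ℤ) - 1) * (|d i| - d i)
        = ((k : ℤ) - 1) * ∑ i : Fin k, |d i| := by
      rw [← Finset.mul_sum, Finset.sum_sub_distrib, key4, sub_zero]
    have habs : (0 : ℤ) ≤ ∑ i : Fin k, |d i| :=
      Finset.sum_nonneg fun i _ => abs_nonneg _
    have hmul : 2 * ∑ i : Fin k, (h i : ℤ) * (-(d i))
        = ∑ i : Fin k, 2 * ((h i : ℤ) * (-(d i))) := Finset.mul_sum _ _ _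
    have hk' : ((k : ℤ) - 1) * ∑ i : Fin k, |d i| ≤ (∑ i : Fin k, |d i|) * k := by
      nlinarith
    calc 2 * (E.card : ℤ) ≤ 2 * ∑ e ∈ E, ((h (g e) : ℤ) - (h (f e) : ℤ)) := by linarith
      _ = 2 * ∑ i : Fin k, (h i : ℤ) * (-(d i)) := by rw [key2]
      _ = ∑ i : Fin k, 2 * ((h i : ℤ) * (-(d i))) := hmul
      _ ≤ ((k : ℤ) - 1) * ∑ i : Fin k, |d i| := by rw [← hD]; exact hsum3
      _ ≤ (∑ i : Fin k, |d i|) * k := hk'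


/-- `X`, `Y` are the vertex classes of a bipartition of the simple graph `G`. -/
def IsBipartitionOf {V : Type*} (G : SimpleGraph V) (X Y : Set V) : Prop :=
  X ∪ Y = Set.univ ∧ Disjoint X Y ∧
    ∀ u v : V, G.Adj u v → (u ∈ X ∧ v ∈ Y) ∨ (u ∈ Y ∧ v ∈ X)

/-- **Small balancing sub-matching** (Proposition 4.2): a matching balancing each part of a
vertex partition of a bipartite graph contains a balancing sub-matching with at most
`(disb U₁ + ⋯ + disb U_k) * k / 2` edges. -/
theorem small_balancing_submatching :
    ∀ (V : Type) [Fintype V] (H : SimpleGraph V) (X Y : Set V),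
      IsBipartitionOf H X Y →
    ∀ (k : ℕ) (U : Fin k → Set V),
      Pairwise (fun i j => Disjoint (U i) (U j)) →
      (⋃ i, U i) = Set.univ →
    ∀ M : H.Subgraph, M.IsMatching →
      (∀ i, ((U i ∩ X) \ M.verts).ncard = ((U i ∩ Y) \ M.verts).ncard) →
    ∃ M' : H.Subgraph, M' ≤ M ∧ M'.IsMatching ∧
      (M'.edgeSet.ncard : ℝ) ≤
        (∑ i : Fin k, |(((U i ∩ X).ncard : ℝ)) - ((U i ∩ Y).ncard : ℝ)|) * k / 2 ∧
      ∀ i, ((U i ∩ X) \ M'.verts).ncard = ((U i ∩ Y) \ M'.verts).ncard := by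
  intro V _ H X Y hbip k U hdisj hcover M hM hbal
  classical
  rcases isEmpty_or_nonempty V with hV | hV
  · -- trivial case: no vertices
    refine ⟨M, le_refl M, hM, ?_, hbal⟩
    have : M.edgeSet = ∅ := by
      ext e
      induction e with
      | _ u v => exact iff_of_false (fun h => isEmptyElim u) (fun h => h.elim)
    rw [this, Set.ncard_empty]
    have h1 : (0 : ℝ) ≤ (∑ i : Fin k, |(((U i ∩ X).ncard : ℝ)) - ((U i ∩ Y).ncard : ℝ)|) * k := by
      positivity
    push_cast
    linarith
  -- choice of class function
  have hex : ∀ v : V, ∃ i, v ∈ U i := by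
    intro v
    have : v ∈ ⋃ i, U i := hcover ▸ Set.mem_univ v
    exact Set.mem_iUnion.mp this
  choose cls hcls using hex
  have hclsu : ∀ v i, v ∈ U i → cls v = i := by
    intro v i hvi
    by_contra hne
    exact Set.disjoint_left.mp (hdisj hne) (hcls v) hvi
  -- choice of X- and Y-endpoints of edges
  have hxy : ∀ e ∈ M.edgeSet, ∃ p : V × V,
      e = s(p.1, p.2) ∧ p.1 ∈ X ∧ p.2 ∈ Y ∧ M.Adj p.1 p.2 := by
    intro e he
    induction e with
    | _ u v =>
      rw [SimpleGraph.Subgraph.mem_edgeSet] at he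
      rcases hbip.2.2 u v (M.adj_sub he) with ⟨hu, hv⟩ | ⟨hu, hv⟩
      · exact ⟨(u, v), rfl, hu, hv, he⟩
      · exact ⟨(v, u), Sym2.eq_swap, hv, hu, he.symm⟩
  choose pe hpe using hxy
  set xe : Sym2 V → V := fun e =>
    if h : e ∈ M.edgeSet then (pe e h).1 else Classical.arbitrary V with hxe
  set ye : Sym2 V → V := fun e =>
    if h : e ∈ M.edgeSet then (pe e h).2 else Classical.arbitrary V with hye
  have hprop : ∀ e ∈ M.edgeSet, e = s(xe e, ye e) ∧ xe e ∈ X ∧ ye e ∈ Y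
      ∧ M.Adj (xe e) (ye e) := by
    intro e he
    simp only [hxe, hye, dif_pos he]
    exact hpe e he
  set f : Sym2 V → Fin k := fun e => cls (xe e) with hf
  set g : Sym2 V → Fin k := fun e => cls (ye e) with hg
  -- uniqueness of edges through a vertex
  have huniq : ∀ v : V, ∀ e ∈ M.edgeSet, ∀ e' ∈ M.edgeSet, v ∈ e → v ∈ e' → e = e' := by
    intro v e he e' he' hv hv'
    obtain ⟨w, rfl⟩ := Sym2.mem_iff_exists.mp hv
    obtain ⟨w', rfl⟩ := Sym2.mem_iff_exists.mp hv'
    rw [SimpleGraph.Subgraph.mem_edgeSet] at he he'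
    have hvm : v ∈ M.verts := M.edge_vert he
    obtain ⟨w₀, -, hw₀⟩ := hM hvm
    rw [hw₀ w he, hw₀ w' he']
  have hfin : M.edgeSet.Finite := Set.toFinite _
  set E0 : Finset (Sym2 V) := hfin.toFinset with hE0
  have hE0mem : ∀ e : Sym2 V, e ∈ E0 ↔ e ∈ M.edgeSet := fun e => hfin.mem_toFinset
  -- general counting lemma for subsets of edges
  have count : ∀ T : Finset (Sym2 V), (∀ e ∈ T, e ∈ M.edgeSet) →
      ∀ (W : Set V) (pr : Sym2 V → V) (fc : Sym2 V → Fin k),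
      (∀ e ∈ M.edgeSet, pr e ∈ e ∧ pr e ∈ W ∧ fc e = cls (pr e)) →
      (∀ e ∈ M.edgeSet, ∀ v ∈ e, v ∈ W → v = pr e) →
      ∀ i, (U i ∩ W ∩ {v | ∃ e ∈ T, v ∈ e}).ncard
        = (T.filter fun e => fc e = i).card := by
    intro T hT W pr fc hpr hprW i
    have hseteq : U i ∩ W ∩ {v | ∃ e ∈ T, v ∈ e}
        = pr '' ↑(T.filter fun e => fc e = i) := by
      ext v
      constructor
      · rintro ⟨⟨hvU, hvW⟩, e, heT, hve⟩
        have he : e ∈ M.edgeSet := hT e heT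
        have hv : v = pr e := hprW e he v hve hvW
        refine ⟨e, ?_, hv.symm⟩
        rw [Finset.coe_filter]
        refine ⟨heT, ?_⟩
        rw [(hpr e he).2.2, ← hv, hclsu v i hvU]
      · rintro ⟨e, heT, rfl⟩
        rw [Finset.coe_filter] at heT
        obtain ⟨heT, hfc⟩ := heT
        have he : e ∈ M.edgeSet := hT e heT
        obtain ⟨hin, hW, hcl⟩ := hpr e he
        refine ⟨⟨?_, hW⟩, e, heT, hin⟩
        rw [hcl] at hfc
        rw [← hfc]
        exact hcls (pr e)
    rw [hseteq, Set.ncard_image_of_injOn, Set.ncard_coe_finset]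
    intro a ha b hb hab
    rw [Finset.coe_filter] at ha hb
    have haM := hT a ha.1
    have hbM := hT b hb.1
    exact huniq (pr a) a haM b hbM (hpr a haM).1 (hab ▸ (hpr b hbM).1)
  have hXprop : ∀ e ∈ M.edgeSet, xe e ∈ e ∧ xe e ∈ X ∧ f e = cls (xe e) := by
    intro e he
    obtain ⟨heq, hX, -, -⟩ := hprop e he
    refine ⟨?_, hX, rfl⟩
    have h0 := Sym2.mem_mk_left (xe e) (ye e)
    rw [← heq] at h0
    exact h0
  have hXuniq : ∀ e ∈ M.edgeSet, ∀ v ∈ e, v ∈ X → v = xe e := by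
    intro e he v hve hvX
    obtain ⟨heq, -, hY, -⟩ := hprop e he
    rw [heq, Sym2.mem_iff] at hve
    rcases hve with rfl | rfl
    · rfl
    · exact absurd hvX (Set.disjoint_right.mp hbip.2.1 hY)
  have hYprop : ∀ e ∈ M.edgeSet, ye e ∈ e ∧ ye e ∈ Y ∧ g e = cls (ye e) := by
    intro e he
    obtain ⟨heq, -, hY, -⟩ := hprop e he
    refine ⟨?_, hY, rfl⟩
    have h0 := Sym2.mem_mk_right (xe e) (ye e)
    rw [← heq] at h0
    exact h0
  have hYuniq : ∀ e ∈ M.edgeSet, ∀ v ∈ e, v ∈ Y → v = ye e := by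
    intro e he v hve hvY
    obtain ⟨heq, hX, -, -⟩ := hprop e he
    rw [heq, Sym2.mem_iff] at hve
    rcases hve with rfl | rfl
    · exact absurd hvY (Set.disjoint_left.mp hbip.2.1 hX)
    · rfl
  -- translation of the balance condition
  have diffeq : ∀ T : Finset (Sym2 V), (∀ e ∈ T, e ∈ M.edgeSet) → ∀ i,
      (((U i ∩ X) \ {v | ∃ e ∈ T, v ∈ e}).ncard = ((U i ∩ Y) \ {v | ∃ e ∈ T, v ∈ e}).ncard
        ↔ ((U i ∩ X).ncard : ℤ) - ((T.filter fun e => f e = i).card : ℤ)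
          = ((U i ∩ Y).ncard : ℤ) - ((T.filter fun e => g e = i).card : ℤ)) := by
    intro T hT i
    set vT : Set V := {v | ∃ e ∈ T, v ∈ e} with hvT
    have hX1 : (U i ∩ X) \ vT = (U i ∩ X) \ (U i ∩ X ∩ vT) := by
      rw [Set.diff_self_inter]
    have hY1 : (U i ∩ Y) \ vT = (U i ∩ Y) \ (U i ∩ Y ∩ vT) := by
      rw [Set.diff_self_inter]
    rw [hX1, hY1, Set.ncard_diff Set.inter_subset_left, Set.ncard_diff Set.inter_subset_left,
      count T hT X xe f hXprop hXuniq i, count T hT Y ye g hYprop hYuniq i]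
    have h1 : (T.filter fun e => f e = i).card ≤ (U i ∩ X).ncard := by
      rw [← count T hT X xe f hXprop hXuniq i]
      exact Set.ncard_le_ncard Set.inter_subset_left (Set.toFinite _)
    have h2 : (T.filter fun e => g e = i).card ≤ (U i ∩ Y).ncard := by
      rw [← count T hT Y ye g hYprop hYuniq i]
      exact Set.ncard_le_ncard Set.inter_subset_left (Set.toFinite _)
    omega
  -- the full edge set supports exactly M.verts
  have hvertsE0 : {v | ∃ e ∈ E0, v ∈ e} = M.verts := by
    ext v
    constructor
    · rintro ⟨e, heE, hve⟩
      rw [hE0mem] at heE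
      obtain ⟨w, rfl⟩ := Sym2.mem_iff_exists.mp hve
      exact M.edge_vert (SimpleGraph.Subgraph.mem_edgeSet.mp heE)
    · intro hv
      obtain ⟨w, hw, -⟩ := hM hv
      exact ⟨s(v, w), (hE0mem _).mpr (SimpleGraph.Subgraph.mem_edgeSet.mpr hw),
        Sym2.mem_mk_left _ _⟩
  have hE0sub : ∀ e ∈ E0, e ∈ M.edgeSet := fun e he => (hE0mem e).mp he
  have hbalE0 : ∀ i, ((E0.filter fun e => f e = i).card : ℤ)
      - ((E0.filter fun e => g e = i).card : ℤ)
      = ((U i ∩ X).ncard : ℤ) - ((U i ∩ Y).ncard : ℤ) := by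
    intro i
    have := (diffeq E0 hE0sub i).mp (by rw [hvertsE0]; exact hbal i)
    omega
  -- apply the core lemma
  obtain ⟨S, hSE0, hSeq, hSb⟩ := core f g E0
  -- build the sub-matching
  refine ⟨{ verts := {v | ∃ e ∈ S, v ∈ e}
            Adj := fun u v => M.Adj u v ∧ s(u, v) ∈ S
            adj_sub := fun h => M.adj_sub h.1
            edge_vert := fun h => ⟨_, h.2, Sym2.mem_mk_left _ _⟩
            symm := ⟨fun u v h => ⟨h.1.symm, Sym2.eq_swap ▸ h.2⟩⟩ }, ?_, ?_, ?_, ?_⟩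
  · constructor
    · rintro v ⟨e, heS, hve⟩
      obtain ⟨w, rfl⟩ := Sym2.mem_iff_exists.mp hve
      exact M.edge_vert (SimpleGraph.Subgraph.mem_edgeSet.mp (hE0sub _ (hSE0 heS)))
    · exact fun u v h => h.1
  · rintro v ⟨e, heS, hve⟩
    obtain ⟨w, rfl⟩ := Sym2.mem_iff_exists.mp hve
    have hadj : M.Adj v w := SimpleGraph.Subgraph.mem_edgeSet.mp (hE0sub _ (hSE0 heS))
    refine ⟨w, ⟨hadj, heS⟩, ?_⟩
    rintro w' ⟨hadj', heS'⟩
    obtain ⟨w₀, -, hw₀⟩ := hM (M.edge_vert hadj)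
    rw [hw₀ w' hadj', hw₀ w hadj]
  · -- cardinality bound
    have hedge : SimpleGraph.Subgraph.edgeSet
        { verts := {v | ∃ e ∈ S, v ∈ e}
          Adj := fun u v => M.Adj u v ∧ s(u, v) ∈ S
          adj_sub := fun h => M.adj_sub h.1
          edge_vert := fun h => ⟨_, h.2, Sym2.mem_mk_left _ _⟩
          symm := ⟨fun u v h => ⟨h.1.symm, Sym2.eq_swap ▸ h.2⟩⟩ } = ↑S := by
      ext e
      induction e with
      | _ u v =>
        rw [SimpleGraph.Subgraph.mem_edgeSet]
        constructor
        · exact fun h => h.2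
        · intro h
          exact ⟨SimpleGraph.Subgraph.mem_edgeSet.mp (hE0sub _ (hSE0 h)), h⟩
    rw [hedge, Set.ncard_coe_finset]
    have hb2 : 2 * (S.card : ℤ)
        ≤ (∑ i : Fin k, |((U i ∩ X).ncard : ℤ) - ((U i ∩ Y).ncard : ℤ)|) * k := by
      calc 2 * (S.card : ℤ) ≤ _ := hSb
        _ = _ := by
          congr 1
          exact Finset.sum_congr rfl fun i _ => by rw [hbalE0 i]
    have hb3 : 2 * (S.card : ℝ)
        ≤ (∑ i : Fin k, |((U i ∩ X).ncard : ℝ) - ((U i ∩ Y).ncard : ℝ)|) * k := by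
      exact_mod_cast hb2
    linarith
  · -- balance of the sub-matching
    intro i
    have hSsub : ∀ e ∈ S, e ∈ M.edgeSet := fun e he => hE0sub _ (hSE0 he)
    refine (diffeq S hSsub i).mpr ?_
    have := hSeq i
    rw [hbalE0 i] at this
    omega
end

section
/- Let G be a graph on n vertices whose vertex set is partitioned into clusters A₁, …, A_r such that G has at most η·n² edges with ends in different clusters, where η ≤ r·β/2. Suppose each cluster A_i is designated either 'near-bipartite', with a prescribed partition {X_i, Y_i} of A_i such that at most β·n² edges of G[A_i] have both ends in X_i or both ends in Y_i, or 'far-from-bipartite'. Let Ḡ be the lift (bipartite double cover) of G and let the clumps of Ḡ be defined from this cluster structure. Then Ḡ has at most 3·r·β·n² edges with ends in different clumps. -/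
open SimpleGraph

/-- The number of edges of `G` with both ends in `X` or both ends in `Y`. -/
noncomputable def badEdges {V : Type*} (G : SimpleGraph V) (X Y : Set V) : ℕ :=
  {e : Sym2 V | e ∈ G.edgeSet ∧ ((∀ v ∈ e, v ∈ X) ∨ (∀ v ∈ e, v ∈ Y))}.ncard

/-- The lift (bipartite double cover) of `G`: vertices are two copies of `V(G)`
(`Sum.inl` is the first copy, `Sum.inr` the second) and `u⁽¹⁾v⁽²⁾` is an edge iff
`uv ∈ E(G)`. -/
def lift {V : Type*} (G : SimpleGraph V) : SimpleGraph (V ⊕ V) :=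
  SimpleGraph.fromRel fun x y =>
    ∃ u v : V, x = Sum.inl u ∧ y = Sum.inr v ∧ G.Adj u v

/-- The clumps of the lift of `G`, given clusters `A i` with designation `near i`
(in which case `A i` is split as `X i ∪ Y i`). -/
def clumps {V : Type*} {r : ℕ} (A X Y : Fin r → Set V) (near : Fin r → Prop) :
    Set (Set (V ⊕ V)) :=
  {S | ∃ i,
    (near i ∧ (S = Sum.inl '' X i ∪ Sum.inr '' Y i ∨
               S = Sum.inl '' Y i ∪ Sum.inr '' X i)) ∨
    (¬ near i ∧ S = Sum.inl '' A i ∪ Sum.inr '' A i)}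

lemma lift_edge_form {V : Type*} (G : SimpleGraph V) {e : Sym2 (V ⊕ V)}
    (he : e ∈ (lift G).edgeSet) : ∃ u v, G.Adj u v ∧ e = s(Sum.inl u, Sum.inr v) := by
  induction e using Sym2.ind with
  | _ x y =>
    rw [SimpleGraph.mem_edgeSet] at he
    rw [lift, SimpleGraph.fromRel_adj] at he
    obtain ⟨-, h | h⟩ := he
    · obtain ⟨u, v, rfl, rfl, huv⟩ := h
      exact ⟨u, v, huv, rfl⟩
    · obtain ⟨u, v, rfl, rfl, huv⟩ := h
      exact ⟨u, v, huv, Sym2.eq_swap⟩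

/-- **Few edges of the lift cross between clumps** (Observation 4.1). -/
theorem lift_few_cross_clump_edges :
    ∀ (V : Type) [Fintype V] (G : SimpleGraph V) (n r : ℕ) (η β : ℝ),
      Fintype.card V = n →
    ∀ (A X Y : Fin r → Set V) (near : Fin r → Prop),
      Pairwise (fun i j => Disjoint (A i) (A j)) →
      (⋃ i, A i) = Set.univ →
      (({e : Sym2 V | e ∈ G.edgeSet ∧ ¬ ∃ i, ∀ v ∈ e, v ∈ A i}.ncard : ℝ) ≤ η * n ^ 2) →
      η ≤ r * β / 2 →
      (∀ i, near i → X i ∪ Y i = A i ∧ Disjoint (X i) (Y i) ∧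
        (badEdges G (X i) (Y i) : ℝ) ≤ β * n ^ 2) →
      (({e : Sym2 (V ⊕ V) | e ∈ (lift G).edgeSet ∧
          ¬ ∃ S ∈ clumps A X Y near, ∀ v ∈ e, v ∈ S}.ncard : ℝ) ≤ 3 * r * β * n ^ 2) := by
  classical
  intro V _ G n r η β hcard A X Y near _hdisj hcover hcross hηβ hNear
  -- trivial case : n = 0
  rcases Nat.eq_zero_or_pos n with hn0 | hnpos
  · subst hn0
    have hVempty : IsEmpty V := Fintype.card_eq_zero_iff.mp hcard
    have : {e : Sym2 (V ⊕ V) | e ∈ (lift G).edgeSet ∧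
        ¬ ∃ S ∈ clumps A X Y near, ∀ v ∈ e, v ∈ S} = ∅ := by
      ext e
      simp only [Set.mem_setOf_eq, Set.mem_empty_iff_false, iff_false, not_and]
      intro he
      obtain ⟨u, v, -, -⟩ := lift_edge_form G he
      exact (hVempty.false u).elim
    rw [this]
    simp
  -- now n ≥ 1
  have hn2pos : (0:ℝ) < (n:ℝ) ^ 2 := by positivity
  set cross : Set (Sym2 V) := {e : Sym2 V | e ∈ G.edgeSet ∧ ¬ ∃ i, ∀ v ∈ e, v ∈ A i}
    with hcrossdef
  have hη0 : 0 ≤ η := by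
    nlinarith [hcross, Nat.cast_nonneg (α := ℝ) cross.ncard]
  have hrpos : 0 < r := by
    by_contra h
    have hr0 : r = 0 := by omega
    subst hr0
    have : (Set.univ : Set V) = ∅ := by
      rw [← hcover]; simp
    have hVempty : IsEmpty V := Set.univ_eq_empty_iff.mp this
    have : n = 0 := by rw [← hcard]; exact Fintype.card_eq_zero
    omega
  have hβ0 : 0 ≤ β := by
    by_contra h
    push_neg at h
    have : (r : ℝ) * β < 0 := mul_neg_of_pos_of_neg (by exact_mod_cast hrpos) h
    linarith
  -- the bad sets
  set B : Fin r → Set (Sym2 V) := fun i =>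
    {e : Sym2 V | near i ∧ e ∈ G.edgeSet ∧ ((∀ v ∈ e, v ∈ X i) ∨ (∀ v ∈ e, v ∈ Y i))}
    with hBdef
  set C : Set (Sym2 (V ⊕ V)) := {e : Sym2 (V ⊕ V) | e ∈ (lift G).edgeSet ∧
      ¬ ∃ S ∈ clumps A X Y near, ∀ v ∈ e, v ∈ S} with hCdef
  -- key structural fact
  have key : ∀ e ∈ C, ∃ u v, G.Adj u v ∧ e = s(Sum.inl u, Sum.inr v) ∧
      (s(u, v) ∈ cross ∨ ∃ i, s(u, v) ∈ B i) := by
    intro e he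
    obtain ⟨heE, hcl⟩ := he
    obtain ⟨u, v, huv, rfl⟩ := lift_edge_form G heE
    refine ⟨u, v, huv, rfl, ?_⟩
    by_cases hsame : ∃ i, u ∈ A i ∧ v ∈ A i
    · obtain ⟨i, hu, hv⟩ := hsame
      by_cases hni : near i
      · obtain ⟨hXY, hdisj, -⟩ := hNear i hni
        rw [← hXY] at hu hv
        right
        rcases hu with hu | hu <;> rcases hv with hv | hv
        · exact ⟨i, hni, huv, Or.inl (by intro w hw; rcases Sym2.mem_iff.mp hw with rfl | rfl
            <;> assumption)⟩
        · exfalso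
          apply hcl
          refine ⟨Sum.inl '' X i ∪ Sum.inr '' Y i, ⟨i, Or.inl ⟨hni, Or.inl rfl⟩⟩, ?_⟩
          intro w hw
          rcases Sym2.mem_iff.mp hw with rfl | rfl
          · exact Or.inl ⟨u, hu, rfl⟩
          · exact Or.inr ⟨v, hv, rfl⟩
        · exfalso
          apply hcl
          refine ⟨Sum.inl '' Y i ∪ Sum.inr '' X i, ⟨i, Or.inl ⟨hni, Or.inr rfl⟩⟩, ?_⟩
          intro w hw
          rcases Sym2.mem_iff.mp hw with rfl | rfl
          · exact Or.inl ⟨u, hu, rfl⟩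
          · exact Or.inr ⟨v, hv, rfl⟩
        · exact ⟨i, hni, huv, Or.inr (by intro w hw; rcases Sym2.mem_iff.mp hw with rfl | rfl
            <;> assumption)⟩
      · exfalso
        apply hcl
        refine ⟨Sum.inl '' A i ∪ Sum.inr '' A i, ⟨i, Or.inr ⟨hni, rfl⟩⟩, ?_⟩
        intro w hw
        rcases Sym2.mem_iff.mp hw with rfl | rfl
        · exact Or.inl ⟨u, hu, rfl⟩
        · exact Or.inr ⟨v, hv, rfl⟩
    · left
      refine ⟨(G.mem_edgeSet).mpr huv, ?_⟩
      rintro ⟨i, hi⟩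
      exact hsame ⟨i, hi u (Sym2.mem_mk_left u v), hi v (Sym2.mem_mk_right u v)⟩
  -- counting
  set F : Sym2 (V ⊕ V) → Sym2 V := Sym2.map (Sum.elim id id) with hFdef
  have hFmk : ∀ u v : V, F s(Sum.inl u, Sum.inr v) = s(u, v) := by
    intro u v; simp [hFdef, Sym2.map_pair_eq]
  have hCfin : C.Finite := Set.toFinite _
  have hcrossfin : cross.Finite := Set.toFinite _
  have hBfin : ∀ i, (B i).Finite := fun i => Set.toFinite _
  set CF := hCfin.toFinset with hCF
  set TF : Finset (Sym2 V) :=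
    hcrossfin.toFinset ∪ Finset.univ.biUnion (fun i => (hBfin i).toFinset) with hTF
  have step1 : CF.card ≤ 2 * (CF.image F).card := by
    apply Finset.card_le_mul_card_image
    intro a ha
    induction a using Sym2.ind with
    | _ p q =>
      have hsub : CF.filter (fun x => F x = s(p, q)) ⊆
          {s(Sum.inl p, Sum.inr q), s(Sum.inl q, Sum.inr p)} := by
        intro e he
        rw [Finset.mem_filter] at he
        obtain ⟨heC, hFe⟩ := he
        rw [Set.Finite.mem_toFinset] at heC
        obtain ⟨u, v, -, rfl, -⟩ := key e heC
        rw [hFmk] at hFe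
        rcases Sym2.eq_iff.mp hFe with ⟨rfl, rfl⟩ | ⟨rfl, rfl⟩
        · exact Finset.mem_insert_self _ _
        · exact Finset.mem_insert_of_mem (Finset.mem_singleton_self _)
      calc (CF.filter (fun x => F x = s(p, q))).card
          ≤ ({s(Sum.inl p, Sum.inr q), s(Sum.inl q, Sum.inr p)} : Finset _).card :=
            Finset.card_le_card hsub
        _ ≤ 2 := Finset.card_insert_le _ _
  have step2 : CF.image F ⊆ TF := by
    intro a ha
    rw [Finset.mem_image] at ha
    obtain ⟨e, heC, rfl⟩ := ha
    rw [Set.Finite.mem_toFinset] at heC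
    obtain ⟨u, v, -, rfl, hmem⟩ := key e heC
    rw [hFmk]
    rcases hmem with h | ⟨i, h⟩
    · exact Finset.mem_union_left _ ((Set.Finite.mem_toFinset _).mpr h)
    · exact Finset.mem_union_right _ (Finset.mem_biUnion.mpr
        ⟨i, Finset.mem_univ i, (Set.Finite.mem_toFinset _).mpr h⟩)
  have step3 : TF.card ≤ cross.ncard + ∑ i, (B i).ncard := by
    calc TF.card ≤ hcrossfin.toFinset.card +
          (Finset.univ.biUnion (fun i => (hBfin i).toFinset)).card := Finset.card_union_le _ _
      _ ≤ hcrossfin.toFinset.card + ∑ i, (hBfin i).toFinset.card := by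
          gcongr
          exact Finset.card_biUnion_le
      _ = cross.ncard + ∑ i, (B i).ncard := by
          rw [Set.ncard_eq_toFinset_card _ hcrossfin]
          congr 1
          refine Finset.sum_congr rfl fun i _ => ?_
          rw [Set.ncard_eq_toFinset_card _ (hBfin i)]
  have hCcard : C.ncard = CF.card :=
    Set.ncard_eq_toFinset_card _ hCfin
  -- bound each B i
  have hBi : ∀ i, ((B i).ncard : ℝ) ≤ β * n ^ 2 := by
    intro i
    by_cases hni : near i
    · obtain ⟨-, -, hbad⟩ := hNear i hni
      have : B i = {e : Sym2 V | e ∈ G.edgeSet ∧ ((∀ v ∈ e, v ∈ X i) ∨ (∀ v ∈ e, v ∈ Y i))} := by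
        ext e; simp [hBdef, hni]
      rw [this]
      exact hbad
    · have : B i = ∅ := by
        ext e; simp [hBdef, hni]
      rw [this]
      simpa using mul_nonneg hβ0 (le_of_lt hn2pos)
  -- assemble
  have hsum : ((∑ i, (B i).ncard : ℕ) : ℝ) ≤ r * (β * n ^ 2) := by
    push_cast
    calc (∑ i, ((B i).ncard : ℝ)) ≤ ∑ _i : Fin r, β * n ^ 2 :=
          Finset.sum_le_sum fun i _ => hBi i
      _ = r * (β * n ^ 2) := by simp [Finset.sum_const, mul_comm]
  have hfinal : (C.ncard : ℝ) ≤ 2 * (cross.ncard + ∑ i, (B i).ncard : ℕ) := by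
    have h1 : C.ncard ≤ 2 * (cross.ncard + ∑ i, (B i).ncard) := by
      rw [hCcard]
      calc CF.card ≤ 2 * (CF.image F).card := step1
        _ ≤ 2 * TF.card := by gcongr
        _ ≤ 2 * (cross.ncard + ∑ i, (B i).ncard) := by gcongr
    exact_mod_cast h1
  have : (C.ncard : ℝ) ≤ 2 * (η * n ^ 2 + r * (β * n ^ 2)) := by
    refine hfinal.trans ?_
    push_cast
    have h2 := hcross
    have hsum' := hsum
    push_cast at hsum'
    linarith
  calc (C.ncard : ℝ) ≤ 2 * (η * n ^ 2 + r * (β * n ^ 2)) := this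
    _ ≤ 3 * r * β * n ^ 2 := by nlinarith [hn2pos.le]
end

section
/- Let G be a graph on n vertices whose vertex set is partitioned into clusters A₁, …, A_r, each designated either 'near-bipartite', with a prescribed partition {X_i, Y_i} of A_i that maximises the number of edges of G with one end in X_i and one end in Y_i, or 'far-from-bipartite'. Suppose each induced subgraph G[A_i] has minimum degree at least δ·n. Let Ḡ be the lift (bipartite double cover) of G with clumps defined from this cluster structure. Then for every clump Ā, the induced subgraph Ḡ[Ā] has minimum degree at least δ·n/2. In particular, if G is c·n-regular, every vertex of Ā has at most (c − δ/2)·n neighbours in V(Ḡ) \ Ā. -/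
open SimpleGraph

lemma lift_adj_inl {V : Type} (G : SimpleGraph V) (a : V) (u : V ⊕ V) :
    (lift G).Adj (Sum.inl a) u ↔ ∃ w, u = Sum.inr w ∧ G.Adj a w := by
  simp only [lift, fromRel_adj]
  constructor
  · rintro ⟨hne, h | h⟩
    · obtain ⟨u', v', h1, h2, h3⟩ := h
      obtain rfl : a = u' := Sum.inl.inj h1
      exact ⟨v', h2, h3⟩
    · obtain ⟨u', v', _, h2, _⟩ := h
      exact absurd h2 (by simp)
  · rintro ⟨w, rfl, hw⟩
    exact ⟨by simp, Or.inl ⟨a, w, rfl, rfl, hw⟩⟩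

lemma lift_adj_inr {V : Type} (G : SimpleGraph V) (a : V) (u : V ⊕ V) :
    (lift G).Adj (Sum.inr a) u ↔ ∃ w, u = Sum.inl w ∧ G.Adj a w := by
  simp only [lift, fromRel_adj]
  constructor
  · rintro ⟨hne, h | h⟩
    · obtain ⟨u', v', h1, _, _⟩ := h
      exact absurd h1 (by simp)
    · obtain ⟨u', v', h1, h2, h3⟩ := h
      obtain rfl : v' = a := Sum.inr.inj h2.symm
      exact ⟨u', h1, h3.symm⟩
  · rintro ⟨w, rfl, hw⟩
    exact ⟨by simp, Or.inr ⟨w, a, rfl, rfl, hw.symm⟩⟩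

lemma ebtw_comm {V : Type*} (G : SimpleGraph V) (X Y : Set V) :
    ebtw G X Y = ebtw G Y X := by
  unfold ebtw
  congr 1
  ext e
  constructor
  · rintro ⟨he, a, ha, b, hb, rfl⟩
    exact ⟨he, b, hb, a, ha, Sym2.eq_swap⟩
  · rintro ⟨he, a, ha, b, hb, rfl⟩
    exact ⟨he, b, hb, a, ha, Sym2.eq_swap⟩

/-- Switching a vertex `x ∈ X` to the other side changes `ebtw` by `d_X(x) - d_Y(x)`. -/
lemma ebtw_switch {V : Type} [Fintype V] (G : SimpleGraph V) (X Y : Set V) (x : V)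
    (hx : x ∈ X) (hd : Disjoint X Y) :
    ebtw G X Y + {w | w ∈ X ∧ G.Adj x w}.ncard
      = ebtw G (X \ {x}) (Y ∪ {x}) + {w | w ∈ Y ∧ G.Adj x w}.ncard := by
  classical
  have hxY : x ∉ Y := Set.disjoint_left.mp hd hx
  set f : V → Sym2 V := fun w => s(x, w) with hf
  have hfinj : Function.Injective f := by
    intro a b hab
    exact (Sym2.congr_right).mp hab
  set N : Set (Sym2 V) :=
    {e | e ∈ G.edgeSet ∧ x ∉ e ∧ ∃ a ∈ X, ∃ b ∈ Y, e = s(a, b)} with hN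
  have eqA : {e : Sym2 V | e ∈ G.edgeSet ∧ ∃ a ∈ X, ∃ b ∈ Y, e = s(a, b)}
      = N ∪ f '' {w | w ∈ Y ∧ G.Adj x w} := by
    ext e
    constructor
    · rintro ⟨he, a, ha, b, hb, rfl⟩
      by_cases hxe : x ∈ s(a, b)
      · right
        rcases Sym2.mem_iff.mp hxe with rfl | rfl
        · exact ⟨b, ⟨hb, (G.mem_edgeSet).mp he⟩, rfl⟩
        · exact absurd hb hxY
      · exact Or.inl ⟨he, hxe, a, ha, b, hb, rfl⟩
    · rintro (⟨he, _, a, ha, b, hb, rfl⟩ | ⟨w, ⟨hw, haw⟩, rfl⟩)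
      · exact ⟨he, a, ha, b, hb, rfl⟩
      · exact ⟨(G.mem_edgeSet).mpr haw, x, hx, w, hw, rfl⟩
  have eqB : {e : Sym2 V | e ∈ G.edgeSet ∧ ∃ a ∈ X \ {x}, ∃ b ∈ Y ∪ {x}, e = s(a, b)}
      = N ∪ f '' {w | w ∈ X ∧ G.Adj x w} := by
    ext e
    constructor
    · rintro ⟨he, a, ⟨haX, hax⟩, b, hb, rfl⟩
      rcases hb with hbY | hbx
      · refine Or.inl ⟨he, ?_, a, haX, b, hbY, rfl⟩
        intro hxe
        rcases Sym2.mem_iff.mp hxe with rfl | rfl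
        · exact hax rfl
        · exact hxY hbY
      · right
        obtain rfl : b = x := hbx
        exact ⟨a, ⟨haX, ((G.mem_edgeSet).mp he).symm⟩, Sym2.eq_swap⟩
    · rintro (⟨he, hxe, a, ha, b, hb, rfl⟩ | ⟨w, ⟨hw, haw⟩, rfl⟩)
      · refine ⟨he, a, ⟨ha, ?_⟩, b, Or.inl hb, rfl⟩
        rintro rfl
        exact hxe (Sym2.mem_mk_left a b)
      · refine ⟨(G.mem_edgeSet).mpr haw, w, ⟨hw, ?_⟩, x, Or.inr rfl, Sym2.eq_swap⟩
        rintro rfl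
        exact (G.irrefl haw)
  have hdisjA : Disjoint N (f '' {w | w ∈ Y ∧ G.Adj x w}) := by
    rw [Set.disjoint_left]
    rintro e ⟨_, hxe, _⟩ ⟨w, _, rfl⟩
    exact hxe (Sym2.mem_mk_left x w)
  have hdisjB : Disjoint N (f '' {w | w ∈ X ∧ G.Adj x w}) := by
    rw [Set.disjoint_left]
    rintro e ⟨_, hxe, _⟩ ⟨w, _, rfl⟩
    exact hxe (Sym2.mem_mk_left x w)
  have h1 : ebtw G X Y = N.ncard + {w | w ∈ Y ∧ G.Adj x w}.ncard := by
    rw [ebtw, eqA, Set.ncard_union_eq hdisjA (Set.toFinite _) (Set.toFinite _),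
      Set.ncard_image_of_injective _ hfinj]
  have h2 : ebtw G (X \ {x}) (Y ∪ {x}) = N.ncard + {w | w ∈ X ∧ G.Adj x w}.ncard := by
    rw [ebtw, eqB, Set.ncard_union_eq hdisjB (Set.toFinite _) (Set.toFinite _),
      Set.ncard_image_of_injective _ hfinj]
  omega

/-- A vertex of `X` in a max-cut partition has at least half its cluster degree into `Y`. -/
lemma deg_half {V : Type} [Fintype V] (G : SimpleGraph V) (n : ℕ) (δ : ℝ) (A X Y : Set V)
    (hXY : X ∪ Y = A) (hd : Disjoint X Y)
    (hmax : ∀ X' Y' : Set V, X' ∪ Y' = A → Disjoint X' Y' →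
      ebtw G X' Y' ≤ ebtw G X Y)
    (hdeg : ∀ v ∈ A, δ * n ≤ ({u | u ∈ A ∧ G.Adj v u}.ncard : ℝ))
    (x : V) (hx : x ∈ X) :
    δ * n / 2 ≤ ({w | w ∈ Y ∧ G.Adj x w}.ncard : ℝ) := by
  have hxA : x ∈ A := hXY ▸ Or.inl hx
  have hunion : (X \ {x}) ∪ (Y ∪ {x}) = A := by
    rw [← hXY]
    ext u
    by_cases h : u = x <;> simp [h, hx]
  have hdisj : Disjoint (X \ {x}) (Y ∪ {x}) := by
    rw [Set.disjoint_union_right]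
    exact ⟨hd.mono_left Set.diff_subset, by simp⟩
  have hle := hmax _ _ hunion hdisj
  have hsw := ebtw_switch G X Y x hx hd
  have hdXY : {w | w ∈ X ∧ G.Adj x w}.ncard ≤ {w | w ∈ Y ∧ G.Adj x w}.ncard := by omega
  have hsplit : {u | u ∈ A ∧ G.Adj x u}.ncard
      = {w | w ∈ X ∧ G.Adj x w}.ncard + {w | w ∈ Y ∧ G.Adj x w}.ncard := by
    have : {u | u ∈ A ∧ G.Adj x u} = {w | w ∈ X ∧ G.Adj x w} ∪ {w | w ∈ Y ∧ G.Adj x w} := by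
      ext u
      simp only [Set.mem_setOf_eq, Set.mem_union, ← hXY, Set.mem_union]
      tauto
    rw [this, Set.ncard_union_eq ?_ (Set.toFinite _) (Set.toFinite _)]
    exact (hd.mono (fun u hu => hu.1) (fun u hu => hu.1))
  have hA := hdeg x hxA
  have hcast : ({w | w ∈ X ∧ G.Adj x w}.ncard : ℝ) ≤ ({w | w ∈ Y ∧ G.Adj x w}.ncard : ℝ) := by
    exact_mod_cast hdXY
  have hcast2 : ({u | u ∈ A ∧ G.Adj x u}.ncard : ℝ)
      = ({w | w ∈ X ∧ G.Adj x w}.ncard : ℝ) + ({w | w ∈ Y ∧ G.Adj x w}.ncard : ℝ) := by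
    exact_mod_cast hsplit
  linarith

/-- Given the two set identities and the inside degree bound, both conclusions follow. -/
lemma conclusions {V : Type} [Fintype V] (G : SimpleGraph V) (n : ℕ) (δ : ℝ) (a : V)
    (T : Set V) (S : Set (V ⊕ V)) (v : V ⊕ V) (f : V → V ⊕ V) (hf : Function.Injective f)
    (h1 : {u | u ∈ S ∧ (lift G).Adj v u} = f '' {w | w ∈ T ∧ G.Adj a w})
    (h2 : {u | u ∉ S ∧ (lift G).Adj v u} = f '' {w | w ∉ T ∧ G.Adj a w})
    (hT : δ * n / 2 ≤ ({w | w ∈ T ∧ G.Adj a w}.ncard : ℝ)) :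
    δ * n / 2 ≤ ({u | u ∈ S ∧ (lift G).Adj v u}.ncard : ℝ) ∧
    ∀ c : ℝ, (∀ w : V, ({u | G.Adj w u}.ncard : ℝ) = c * n) →
      ({u | u ∉ S ∧ (lift G).Adj v u}.ncard : ℝ) ≤ (c - δ / 2) * n := by
  constructor
  · rw [h1, Set.ncard_image_of_injective _ hf]
    exact hT
  · intro c hc
    rw [h2, Set.ncard_image_of_injective _ hf]
    have hu : {w | G.Adj a w} = {w | w ∈ T ∧ G.Adj a w} ∪ {w | w ∉ T ∧ G.Adj a w} := by
      ext w
      by_cases h : w ∈ T <;> simp [h]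
    have hdisj : Disjoint {w | w ∈ T ∧ G.Adj a w} {w | w ∉ T ∧ G.Adj a w} := by
      rw [Set.disjoint_left]
      rintro w ⟨h1', _⟩ ⟨h2', _⟩
      exact h2' h1'
    have hcard : {w | G.Adj a w}.ncard
        = {w | w ∈ T ∧ G.Adj a w}.ncard + {w | w ∉ T ∧ G.Adj a w}.ncard := by
      rw [hu, Set.ncard_union_eq hdisj (Set.toFinite _) (Set.toFinite _)]
    have hca := hc a
    have hcardR : ({w | G.Adj a w}.ncard : ℝ)
        = ({w | w ∈ T ∧ G.Adj a w}.ncard : ℝ) + ({w | w ∉ T ∧ G.Adj a w}.ncard : ℝ) := by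
      exact_mod_cast hcard
    have : (c - δ / 2) * n = c * n - δ * n / 2 := by ring
    linarith

/-- One clump, one side. -/
lemma clump_piece {V : Type} [Fintype V] (G : SimpleGraph V) (n : ℕ) (δ : ℝ) (P Q : Set V)
    (hP : ∀ a ∈ P, δ * n / 2 ≤ ({w | w ∈ Q ∧ G.Adj a w}.ncard : ℝ))
    (hQ : ∀ a ∈ Q, δ * n / 2 ≤ ({w | w ∈ P ∧ G.Adj a w}.ncard : ℝ))
    (v : V ⊕ V) (hv : v ∈ Sum.inl '' P ∪ Sum.inr '' Q) :
    δ * n / 2 ≤ ({u | u ∈ Sum.inl '' P ∪ Sum.inr '' Q ∧ (lift G).Adj v u}.ncard : ℝ) ∧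
    ∀ c : ℝ, (∀ w : V, ({u | G.Adj w u}.ncard : ℝ) = c * n) →
      ({u | u ∉ Sum.inl '' P ∪ Sum.inr '' Q ∧ (lift G).Adj v u}.ncard : ℝ) ≤ (c - δ / 2) * n := by
  set S : Set (V ⊕ V) := Sum.inl '' P ∪ Sum.inr '' Q with hS
  rcases hv with ⟨a, ha, rfl⟩ | ⟨a, ha, rfl⟩
  · refine conclusions G n δ a Q S _ Sum.inr Sum.inr_injective ?_ ?_ (hP a ha)
    · ext u
      constructor
      · rintro ⟨huS, hadj⟩
        obtain ⟨w, rfl, haw⟩ := (lift_adj_inl G a u).mp hadj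
        rcases huS with ⟨p, _, hp⟩ | ⟨q, hq, hq'⟩
        · exact absurd hp (by simp)
        · exact ⟨w, ⟨(Sum.inr.inj hq') ▸ hq, haw⟩, rfl⟩
      · rintro ⟨w, ⟨hw, haw⟩, rfl⟩
        exact ⟨Or.inr ⟨w, hw, rfl⟩, (lift_adj_inl G a _).mpr ⟨w, rfl, haw⟩⟩
    · ext u
      constructor
      · rintro ⟨huS, hadj⟩
        obtain ⟨w, rfl, haw⟩ := (lift_adj_inl G a u).mp hadj
        refine ⟨w, ⟨fun hw => huS (Or.inr ⟨w, hw, rfl⟩), haw⟩, rfl⟩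
      · rintro ⟨w, ⟨hw, haw⟩, rfl⟩
        refine ⟨?_, (lift_adj_inl G a _).mpr ⟨w, rfl, haw⟩⟩
        rintro (⟨p, _, hp⟩ | ⟨q, hq, hq'⟩)
        · exact absurd hp (by simp)
        · exact hw (Sum.inr.inj hq' ▸ hq)
  · refine conclusions G n δ a P S _ Sum.inl Sum.inl_injective ?_ ?_ (hQ a ha)
    · ext u
      constructor
      · rintro ⟨huS, hadj⟩
        obtain ⟨w, rfl, haw⟩ := (lift_adj_inr G a u).mp hadj
        rcases huS with ⟨p, hp, hp'⟩ | ⟨q, _, hq⟩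
        · exact ⟨w, ⟨(Sum.inl.inj hp') ▸ hp, haw⟩, rfl⟩
        · exact absurd hq (by simp)
      · rintro ⟨w, ⟨hw, haw⟩, rfl⟩
        exact ⟨Or.inl ⟨w, hw, rfl⟩, (lift_adj_inr G a _).mpr ⟨w, rfl, haw⟩⟩
    · ext u
      constructor
      · rintro ⟨huS, hadj⟩
        obtain ⟨w, rfl, haw⟩ := (lift_adj_inr G a u).mp hadj
        refine ⟨w, ⟨fun hw => huS (Or.inl ⟨w, hw, rfl⟩), haw⟩, rfl⟩
      · rintro ⟨w, ⟨hw, haw⟩, rfl⟩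
        refine ⟨?_, (lift_adj_inr G a _).mpr ⟨w, rfl, haw⟩⟩
        rintro (⟨p, hp, hp'⟩ | ⟨q, _, hq⟩)
        · exact hw (Sum.inl.inj hp' ▸ hp)
        · exact absurd hq (by simp)

/-- **Minimum degree inside clumps** (Observation 4.2): every clump induces a subgraph of
the lift of minimum degree at least `δ n / 2`; in particular, in a `c n`-regular graph
every vertex of a clump has at most `(c − δ/2) n` neighbours outside its clump. -/
theorem clump_min_degree :
    ∀ (V : Type) [Fintype V] (G : SimpleGraph V) (n r : ℕ) (δ : ℝ),
      Fintype.card V = n →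
    ∀ (A X Y : Fin r → Set V) (near : Fin r → Prop),
      Pairwise (fun i j => Disjoint (A i) (A j)) →
      (⋃ i, A i) = Set.univ →
      (∀ i, ∀ v ∈ A i, δ * n ≤ ({u | u ∈ A i ∧ G.Adj v u}.ncard : ℝ)) →
      (∀ i, near i → X i ∪ Y i = A i ∧ Disjoint (X i) (Y i) ∧
        ∀ X' Y' : Set V, X' ∪ Y' = A i → Disjoint X' Y' →
          ebtw G X' Y' ≤ ebtw G (X i) (Y i)) →
    ∀ S ∈ clumps A X Y near, ∀ v ∈ S,
      δ * n / 2 ≤ ({u | u ∈ S ∧ (lift G).Adj v u}.ncard : ℝ) ∧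
      ∀ c : ℝ, (∀ w : V, ({u | G.Adj w u}.ncard : ℝ) = c * n) →
        ({u | u ∉ S ∧ (lift G).Adj v u}.ncard : ℝ) ≤ (c - δ / 2) * n := by
  intro V _ G n r δ hn A X Y near hpw hcov hdeg hnear S hS v hv
  obtain ⟨i, hi⟩ := hS
  rcases hi with ⟨hni, hcase⟩ | ⟨hni, rfl⟩
  · obtain ⟨hXY, hdisj, hmax⟩ := hnear i hni
    have hmax' : ∀ X' Y' : Set V, X' ∪ Y' = A i → Disjoint X' Y' →
        ebtw G X' Y' ≤ ebtw G (Y i) (X i) := by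
      intro X' Y' h1 h2
      rw [ebtw_comm G (Y i) (X i)]
      exact hmax X' Y' h1 h2
    have hPQ : ∀ a ∈ X i, δ * n / 2 ≤ ({w | w ∈ Y i ∧ G.Adj a w}.ncard : ℝ) := by
      intro a ha
      exact deg_half G n δ (A i) (X i) (Y i) hXY hdisj hmax (hdeg i) a ha
    have hQP : ∀ a ∈ Y i, δ * n / 2 ≤ ({w | w ∈ X i ∧ G.Adj a w}.ncard : ℝ) := by
      intro a ha
      exact deg_half G n δ (A i) (Y i) (X i) (by rw [Set.union_comm]; exact hXY)
        hdisj.symm hmax' (hdeg i) a ha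
    rcases hcase with rfl | rfl
    · exact clump_piece G n δ (X i) (Y i) hPQ hQP v hv
    · exact clump_piece G n δ (Y i) (X i) hQP hPQ v hv
  · have hAA : ∀ a ∈ A i, δ * n / 2 ≤ ({w | w ∈ A i ∧ G.Adj a w}.ncard : ℝ) := by
      intro a ha
      have h := hdeg i a ha
      have h0 : (0 : ℝ) ≤ ({w | w ∈ A i ∧ G.Adj a w}.ncard : ℝ) := Nat.cast_nonneg _
      linarith
    exact clump_piece G n δ (A i) (A i) hAA hAA v hv
end

section
/- Let H be a bipartite graph with vertex classes V¹ and V² whose vertex set is partitioned into sets Ā₁, …, Ā_s; write B_i = Ā_i ∩ V¹ and T_i = Ā_i ∩ V². A fractional matching in H is a function w assigning to each edge a weight in [0,1] such that for every vertex v the total weight w(v) of edges incident to v is at most 1; for U ⊆ V(H) write w(U) = Σ_{v ∈ U} w(v). Suppose there exists a fractional matching w in H with Σ_{i=1}^{s} | (|T_i| − w(T_i)) − (|B_i| − w(B_i)) | ≤ 0.9. Then H contains a matching M such that |T_i \ V(M)| = |B_i \ V(M)| for every i ∈ [s]. -/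
open SimpleGraph Finset

/-- The total weight at `v` of an edge-weighting `w` (the "vertex weight" of a fractional
matching). -/
noncomputable def vertWeight {V : Type*} [Fintype V] (H : SimpleGraph V)
    [DecidableRel H.Adj] (w : Sym2 V → ℝ) (v : V) : ℝ :=
  ∑ u ∈ Finset.univ.filter (fun u => H.Adj v u), w s(v, u)

section Aux

variable {V : Type} [Fintype V] [DecidableEq V] (H : SimpleGraph V) [DecidableRel H.Adj]
  (V1 V2 : Finset V) {s : ℕ} (Abar : Fin s → Finset V) (w : Sym2 V → ℝ)
  (p : V → Fin s) (m : Fin s → ℕ)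

/-- Residual (uncovered) fractional amount in `Āᵢ ∩ V²` (the tops `Tᵢ`). -/
noncomputable def RT (i : Fin s) : ℝ := ∑ v ∈ Abar i ∩ V2, (1 - vertWeight H w v)

/-- Residual (uncovered) fractional amount in `Āᵢ ∩ V¹` (the bottoms `Bᵢ`). -/
noncomputable def RB (i : Fin s) : ℝ := ∑ v ∈ Abar i ∩ V1, (1 - vertWeight H w v)

/-- Neighbourhoods in the auxiliary (gadget) bipartite graph.  The `X`-side consists of the
top vertices `V²` together with dummy vertices `(i, k)`, the `Y`-side of the bottom vertices
`V¹` together with dummy vertices `(i, k)`.  A top `t` is joined to its `H`-neighbours and to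
all dummies of its own part; the dummy `(i,k)` on the `X` side is joined to all of `Bᵢ` and to
the corresponding dummy `(i,k)` on the `Y` side. -/
def nbr : ({v // v ∈ V2} ⊕ (Σ i : Fin s, Fin (m i))) →
    Finset ({v // v ∈ V1} ⊕ (Σ i : Fin s, Fin (m i)))
  | .inl t => ((V1.attach.filter (fun b => H.Adj t.1 b.1)).image Sum.inl) ∪
      ((Finset.univ : Finset (Fin (m (p t.1)))).image (fun k => Sum.inr ⟨p t.1, k⟩))
  | .inr ik => ((V1.attach.filter (fun b => b.1 ∈ Abar ik.1)).image Sum.inl) ∪ {Sum.inr ik}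

/-- The fractional perfect matching on the gadget graph. -/
noncomputable def Wt : ({v // v ∈ V2} ⊕ (Σ i : Fin s, Fin (m i))) →
    ({v // v ∈ V1} ⊕ (Σ i : Fin s, Fin (m i))) → ℝ
  | .inl t, .inl b => if H.Adj t.1 b.1 then w s(t.1, b.1) else 0
  | .inl t, .inr jk => if jk.1 = p t.1 then (1 - vertWeight H w t.1) / (m jk.1) else 0
  | .inr ik, .inl b =>
      if b.1 ∈ Abar ik.1 then (1 - vertWeight H w b.1) / (m ik.1) else 0
  | .inr ik, .inr jl =>
      if jl = ik then 1 - (max (RT H V2 Abar w ik.1) (RB H V1 Abar w ik.1)) / (m ik.1) else 0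

end Aux

set_option maxHeartbeats 1600000 in
/-- **From an almost balancing fractional matching to a balancing matching**
(Step 2 of the proof of Lemma 4.1): if a bipartite graph `H`, with classes `V¹, V²` and
vertex set  partitioned into `Ā₁, …, Ā_s` (with `B_i = Ā_i ∩ V¹`, `T_i = Ā_i ∩ V²`),
carries a fractional matching `w` with `∑ᵢ |(|T_i| − w(T_i)) − (|B_i| − w(B_i))| ≤ 0.9`,
then `H` has a matching balancing every `Ā_i`. -/
theorem fractional_to_balancing_matching :
    ∀ (V : Type) [Fintype V] [DecidableEq V] (H : SimpleGraph V) [DecidableRel H.Adj]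
      (V1 V2 : Finset V),
      V1 ∪ V2 = Finset.univ → Disjoint V1 V2 →
      (∀ u v : V, H.Adj u v → (u ∈ V1 ∧ v ∈ V2) ∨ (u ∈ V2 ∧ v ∈ V1)) →
    ∀ (s : ℕ) (Abar : Fin s → Finset V),
      Pairwise (fun i j => Disjoint (Abar i) (Abar j)) →
      (∀ v : V, ∃ i, v ∈ Abar i) →
    ∀ w : Sym2 V → ℝ,
      (∀ e ∈ H.edgeSet, 0 ≤ w e ∧ w e ≤ 1) →
      (∀ v : V, vertWeight H w v ≤ 1) →
      (∑ i : Fin s,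
        |(((Abar i ∩ V2).card : ℝ) - ∑ v ∈ Abar i ∩ V2, vertWeight H w v) -
          (((Abar i ∩ V1).card : ℝ) - ∑ v ∈ Abar i ∩ V1, vertWeight H w v)| ≤ 0.9) →
    ∃ M : H.Subgraph, M.IsMatching ∧
      ∀ i : Fin s,
        (((Abar i ∩ V2 : Finset V) : Set V) \ M.verts).ncard =
          (((Abar i ∩ V1 : Finset V) : Set V) \ M.verts).ncard := by
  intro V _ _ H _ V1 V2 hunion hdisj hbip s Abar hPW hcovex w hw01 hw1 hsum
  classical
  -- the part function
  set p : V → Fin s := fun v => (hcovex v).choose with hpdef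
  have hp : ∀ v, v ∈ Abar (p v) := fun v => (hcovex v).choose_spec
  have hpeq : ∀ v i, v ∈ Abar i → p v = i := by
    intro v i hvi
    by_contra hne
    exact (Finset.disjoint_left.1 (hPW hne)) (hp v) hvi
  -- sizes of the dummy classes
  set m : Fin s → ℕ := fun i => (Abar i).card + 1 with hmdef
  have hm0 : ∀ i, (0 : ℝ) < m i := by
    intro i; simp [hmdef]; positivity
  -- elementary facts
  have hVv : ∀ v : V, v ∈ V1 ∨ v ∈ V2 := by
    intro v
    have : v ∈ V1 ∪ V2 := by rw [hunion]; exact Finset.mem_univ v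
    exact Finset.mem_union.1 this
  have hnbr1 : ∀ v u, v ∈ V2 → H.Adj v u → u ∈ V1 := by
    intro v u hv h
    rcases hbip v u h with ⟨h1, _⟩ | ⟨_, h2⟩
    · exact absurd hv (Finset.disjoint_left.1 hdisj h1)
    · exact h2
  have hnbr2 : ∀ v u, v ∈ V1 → H.Adj v u → u ∈ V2 := by
    intro v u hv h
    rcases hbip v u h with ⟨_, h2⟩ | ⟨h1, _⟩
    · exact h2
    · exact absurd hv (Finset.disjoint_right.1 hdisj h1)
  have hwe0 : ∀ u v, H.Adj u v → 0 ≤ w s(u, v) := by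
    intro u v h; exact (hw01 _ (H.mem_edgeSet.2 h)).1
  have hvw0 : ∀ v, 0 ≤ vertWeight H w v := by
    intro v
    refine Finset.sum_nonneg fun u hu => ?_
    exact hwe0 v u (by simpa using hu)
  -- vertex weight as a sum over the opposite class
  have hvwV2 : ∀ v ∈ V2, vertWeight H w v = ∑ b ∈ V1, if H.Adj v b then w s(v, b) else 0 := by
    intro v hv
    rw [vertWeight, ← Finset.sum_filter]
    refine Finset.sum_congr ?_ (fun _ _ => rfl)
    ext u
    simp only [Finset.mem_filter, Finset.mem_univ, true_and]
    exact ⟨fun h => ⟨hnbr1 v u hv h, h⟩, fun h => h.2⟩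
  have hvwV1 : ∀ v ∈ V1, vertWeight H w v = ∑ b ∈ V2, if H.Adj v b then w s(v, b) else 0 := by
    intro v hv
    rw [vertWeight, ← Finset.sum_filter]
    refine Finset.sum_congr ?_ (fun _ _ => rfl)
    ext u
    simp only [Finset.mem_filter, Finset.mem_univ, true_and]
    exact ⟨fun h => ⟨hnbr2 v u hv h, h⟩, fun h => h.2⟩
  -- fibers of the partition
  have hfib : ∀ (i : Fin s) (S : Finset V), Abar i ∩ S = S.filter (fun v => p v = i) := by
    intro i S
    ext v
    simp only [Finset.mem_inter, Finset.mem_filter]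
    constructor
    · rintro ⟨h1, h2⟩; exact ⟨h2, hpeq v i h1⟩
    · rintro ⟨h1, h2⟩; exact ⟨h2 ▸ hp v, h1⟩
  have hpartsum : ∀ (g : V → ℝ) (S : Finset V),
      ∑ i : Fin s, ∑ v ∈ Abar i ∩ S, g v = ∑ v ∈ S, g v := by
    intro g S
    have := Finset.sum_fiberwise_of_maps_to (s := S) (t := (Finset.univ : Finset (Fin s)))
      (g := p) (fun x _ => Finset.mem_univ (p x)) g
    rw [← this]
    exact Finset.sum_congr rfl fun i _ => by rw [hfib i S]
  -- double counting: total weight on V2 equals total weight on V1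
  have hdouble : ∑ v ∈ V2, vertWeight H w v = ∑ v ∈ V1, vertWeight H w v := by
    calc ∑ v ∈ V2, vertWeight H w v
        = ∑ v ∈ V2, ∑ b ∈ V1, if H.Adj v b then w s(v, b) else 0 :=
          Finset.sum_congr rfl (fun v hv => hvwV2 v hv)
      _ = ∑ b ∈ V1, ∑ v ∈ V2, if H.Adj v b then w s(v, b) else 0 := Finset.sum_comm
      _ = ∑ b ∈ V1, vertWeight H w b := by
          refine Finset.sum_congr rfl fun b hb => ?_
          rw [hvwV1 b hb]
          refine Finset.sum_congr rfl fun v hv => ?_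
          by_cases h : H.Adj v b
          · rw [if_pos h, if_pos (H.adj_symm h), Sym2.eq_swap]
          · rw [if_neg h, if_neg (fun h' => h (H.adj_symm h'))]
  -- |V1| = |V2|
  have hcards : V2.card = V1.card := by
    have ecard : ∀ S : Finset V, ∑ i : Fin s, ((Abar i ∩ S).card : ℝ) = S.card := by
      intro S
      have := hpartsum (fun _ => (1 : ℝ)) S
      simpa using this
    have h1 : ∑ i : Fin s,
        ((((Abar i ∩ V2).card : ℝ) - ∑ v ∈ Abar i ∩ V2, vertWeight H w v) -
          (((Abar i ∩ V1).card : ℝ) - ∑ v ∈ Abar i ∩ V1, vertWeight H w v)) =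
        (V2.card : ℝ) - V1.card := by
      rw [Finset.sum_sub_distrib, Finset.sum_sub_distrib, Finset.sum_sub_distrib,
        ecard V2, ecard V1, hpartsum (vertWeight H w) V2, hpartsum (vertWeight H w) V1, hdouble]
      ring
    have h2 : |(V2.card : ℝ) - V1.card| ≤ 0.9 :=
      h1 ▸ le_trans (Finset.abs_sum_le_sum_abs _ _) hsum
    have h3 : |(V2.card : ℤ) - V1.card| < 1 := by
      have hc : ((V2.card : ℝ) - V1.card) = (((V2.card : ℤ) - V1.card : ℤ) : ℝ) := by push_cast; ring
      rw [hc, ← Int.cast_abs] at h2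
      have := lt_of_le_of_lt h2 (show (0.9:ℝ) < ((1:ℤ):ℝ) by norm_num)
      exact_mod_cast this
    rw [abs_lt] at h3; omega
  -- residuals
  have hRTnn : ∀ i, 0 ≤ RT H V2 Abar w i :=
    fun i => Finset.sum_nonneg fun v _ => by linarith [hw1 v]
  have hRBnn : ∀ i, 0 ≤ RB H V1 Abar w i :=
    fun i => Finset.sum_nonneg fun v _ => by linarith [hw1 v]
  have hRTle : ∀ i, RT H V2 Abar w i ≤ m i := by
    intro i
    calc RT H V2 Abar w i ≤ ∑ _v ∈ Abar i ∩ V2, (1 : ℝ) :=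
          Finset.sum_le_sum fun v _ => by linarith [hvw0 v]
      _ = (Abar i ∩ V2).card := by simp
      _ ≤ m i := by
          have : (Abar i ∩ V2).card ≤ m i := le_trans
            (Finset.card_le_card (Finset.inter_subset_left)) (by simp [hmdef])
          exact_mod_cast this
  have hRBle : ∀ i, RB H V1 Abar w i ≤ m i := by
    intro i
    calc RB H V1 Abar w i ≤ ∑ _v ∈ Abar i ∩ V1, (1 : ℝ) :=
          Finset.sum_le_sum fun v _ => by linarith [hvw0 v]
      _ = (Abar i ∩ V1).card := by simp
      _ ≤ m i := by
          have : (Abar i ∩ V1).card ≤ m i := le_trans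
            (Finset.card_le_card (Finset.inter_subset_left)) (by simp [hmdef])
          exact_mod_cast this
  have hRTval : ∀ i, RT H V2 Abar w i =
      ((Abar i ∩ V2).card : ℝ) - ∑ v ∈ Abar i ∩ V2, vertWeight H w v := by
    intro i; rw [RT, Finset.sum_sub_distrib]; simp
  have hRBval : ∀ i, RB H V1 Abar w i =
      ((Abar i ∩ V1).card : ℝ) - ∑ v ∈ Abar i ∩ V1, vertWeight H w v := by
    intro i; rw [RB, Finset.sum_sub_distrib]; simp
  have hRdiff : ∑ i : Fin s, (max (RT H V2 Abar w i) (RB H V1 Abar w i) - RB H V1 Abar w i)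
      ≤ 0.9 := by
    refine le_trans (Finset.sum_le_sum (fun i _ => ?_)) hsum
    rw [← hRTval i, ← hRBval i]
    rcases le_total (RT H V2 Abar w i) (RB H V1 Abar w i) with h | h
    · rw [max_eq_right h]; simp [abs_nonneg]
    · rw [max_eq_left h]; exact le_abs_self _
  -- nonnegativity of the gadget weights
  have hmaxle : ∀ i : Fin s,
      max (RT H V2 Abar w i) (RB H V1 Abar w i) ≤ m i :=
    fun i => max_le (hRTle i) (hRBle i)
  have hWnn : ∀ x y, 0 ≤ Wt H V1 V2 Abar w p m x y := by
    rintro (t | ik) (b | jl) <;> simp only [Wt]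
    · split_ifs with h
      · exact hwe0 _ _ h
      · exact le_rfl
    · split_ifs with h
      · exact div_nonneg (by linarith [hw1 t.1]) (le_of_lt (hm0 _))
      · exact le_rfl
    · split_ifs with h
      · exact div_nonneg (by linarith [hw1 b.1]) (le_of_lt (hm0 _))
      · exact le_rfl
    · split_ifs with h
      · rw [sub_nonneg]
        exact (div_le_one (hm0 _)).2 (hmaxle _)
      · exact le_rfl
  -- membership in the gadget neighbourhoods
  have hnbrmem1 : ∀ (t : {v // v ∈ V2}) (b : {v // v ∈ V1}), H.Adj t.1 b.1 →
      (Sum.inl b : {v // v ∈ V1} ⊕ (Σ i : Fin s, Fin (m i))) ∈ nbr H V1 V2 Abar p m (.inl t) := by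
    intro t b h
    exact Finset.mem_union_left _
      (Finset.mem_image_of_mem _ (Finset.mem_filter.2 ⟨Finset.mem_attach _ _, h⟩))
  have hnbrmem2 : ∀ (t : {v // v ∈ V2}) (k : Fin (m (p t.1))),
      (Sum.inr ⟨p t.1, k⟩ : {v // v ∈ V1} ⊕ (Σ i : Fin s, Fin (m i))) ∈
        nbr H V1 V2 Abar p m (.inl t) :=
    fun t k => Finset.mem_union_right _ (Finset.mem_image_of_mem _ (Finset.mem_univ k))
  have hnbrmem3 : ∀ (ik : Σ i : Fin s, Fin (m i)) (b : {v // v ∈ V1}), b.1 ∈ Abar ik.1 →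
      (Sum.inl b : {v // v ∈ V1} ⊕ (Σ i : Fin s, Fin (m i))) ∈ nbr H V1 V2 Abar p m (.inr ik) := by
    intro ik b h
    exact Finset.mem_union_left _
      (Finset.mem_image_of_mem _ (Finset.mem_filter.2 ⟨Finset.mem_attach _ _, h⟩))
  have hnbrmem4 : ∀ ik : Σ i : Fin s, Fin (m i),
      (Sum.inr ik : {v // v ∈ V1} ⊕ (Σ i : Fin s, Fin (m i))) ∈ nbr H V1 V2 Abar p m (.inr ik) :=
    fun ik => Finset.mem_union_right _ (Finset.mem_singleton_self _)
  -- support of the weights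
  have hsupp : ∀ x y, y ∉ nbr H V1 V2 Abar p m x → Wt H V1 V2 Abar w p m x y = 0 := by
    rintro (t | ik) (b | jl) hy <;> simp only [Wt]
    · exact if_neg (fun h => hy (hnbrmem1 t b h))
    · rcases jl with ⟨j, k⟩
      refine if_neg (fun h => hy ?_)
      dsimp only at h
      subst h
      exact hnbrmem2 t k
    · exact if_neg (fun h => hy (hnbrmem3 ik b h))
    · exact if_neg (fun h => hy (by rw [h]; exact hnbrmem4 ik))
  -- row sums
  have hrowl : ∀ t : {v // v ∈ V2}, ∑ y, Wt H V1 V2 Abar w p m (.inl t) y = 1 := by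
    intro t
    rw [Fintype.sum_sum_type]
    have e1 : ∑ b : {v // v ∈ V1}, Wt H V1 V2 Abar w p m (.inl t) (.inl b) =
        vertWeight H w t.1 := by
      simp only [Wt]
      rw [Finset.univ_eq_attach,
        Finset.sum_attach V1 (fun v => if H.Adj t.1 v then w s(t.1, v) else 0),
        ← hvwV2 t.1 t.2]
    have e2 : ∑ jk : Σ i : Fin s, Fin (m i), Wt H V1 V2 Abar w p m (.inl t) (.inr jk) =
        1 - vertWeight H w t.1 := by
      simp only [Wt]
      rw [← Finset.univ_sigma_univ, Finset.sum_sigma]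
      have e3 : ∀ i : Fin s, (∑ k : Fin (m i),
          if i = p t.1 then (1 - vertWeight H w t.1) / (m i) else 0) =
          if i = p t.1 then (m i : ℝ) * ((1 - vertWeight H w t.1) / (m i)) else 0 := by
        intro i
        split_ifs with h
        · simp [Finset.sum_const, nsmul_eq_mul]
        · simp
      rw [Finset.sum_congr rfl (fun i _ => e3 i), Finset.sum_eq_single (p t.1)]
      · rw [if_pos rfl, mul_div_cancel₀]
        exact ne_of_gt (hm0 _)
      · intro j _ hj; exact if_neg hj
      · intro h; exact absurd (Finset.mem_univ _) h
    rw [e1, e2]; ring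
  have hfibT : ∀ i : Fin s, ∑ v ∈ V2, (if i = p v then (1 - vertWeight H w v) / (m i) else 0) =
      RT H V2 Abar w i / m i := by
    intro i
    rw [← Finset.sum_filter, RT, ← Finset.sum_div]
    congr 1
    rw [hfib i V2]
    congr 1
    ext v
    simp [eq_comm]
  have hrowr : ∀ ik : Σ i : Fin s, Fin (m i),
      ∑ y, Wt H V1 V2 Abar w p m (.inr ik) y =
        1 - (max (RT H V2 Abar w ik.1) (RB H V1 Abar w ik.1) - RB H V1 Abar w ik.1) / m ik.1 := by
    intro ik
    rw [Fintype.sum_sum_type]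
    have e1 : ∑ b : {v // v ∈ V1}, Wt H V1 V2 Abar w p m (.inr ik) (.inl b) =
        RB H V1 Abar w ik.1 / m ik.1 := by
      simp only [Wt]
      rw [Finset.univ_eq_attach,
        Finset.sum_attach V1 (fun v => if v ∈ Abar ik.1 then (1 - vertWeight H w v) / (m ik.1) else 0),
        ← Finset.sum_filter, RB, ← Finset.sum_div]
      congr 1
      rw [Finset.filter_mem_eq_inter, Finset.inter_comm]
    have e2 : ∑ jl : Σ i : Fin s, Fin (m i), Wt H V1 V2 Abar w p m (.inr ik) (.inr jl) =
        1 - (max (RT H V2 Abar w ik.1) (RB H V1 Abar w ik.1)) / m ik.1 := by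
      simp only [Wt]
      rw [Finset.sum_ite_eq' Finset.univ ik
        (fun _ => 1 - (max (RT H V2 Abar w ik.1) (RB H V1 Abar w ik.1)) / m ik.1)]
      simp
    rw [e1, e2, sub_div]
    ring
  -- column sums
  have hcol : ∀ y, ∑ x, Wt H V1 V2 Abar w p m x y ≤ 1 := by
    rintro (b | jl)
    · rw [Fintype.sum_sum_type]
      have e1 : ∑ t : {v // v ∈ V2}, Wt H V1 V2 Abar w p m (.inl t) (.inl b) =
          vertWeight H w b.1 := by
        simp only [Wt]
        rw [Finset.univ_eq_attach,
          Finset.sum_attach V2 (fun v => if H.Adj v b.1 then w s(v, b.1) else 0),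
          hvwV1 b.1 b.2]
        refine Finset.sum_congr rfl fun v hv => ?_
        by_cases h : H.Adj b.1 v
        · rw [if_pos h, if_pos (H.adj_symm h), Sym2.eq_swap]
        · rw [if_neg h, if_neg (fun h' => h (H.adj_symm h'))]
      have e2 : ∑ ik : Σ i : Fin s, Fin (m i), Wt H V1 V2 Abar w p m (.inr ik) (.inl b) =
          1 - vertWeight H w b.1 := by
        simp only [Wt]
        rw [← Finset.univ_sigma_univ, Finset.sum_sigma]
        have e3 : ∀ i : Fin s, (∑ k : Fin (m i),
            if b.1 ∈ Abar i then (1 - vertWeight H w b.1) / (m i) else 0) =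
            if b.1 ∈ Abar i then (m i : ℝ) * ((1 - vertWeight H w b.1) / (m i)) else 0 := by
          intro i
          split_ifs with h
          · simp [Finset.sum_const, nsmul_eq_mul]
          · simp
        rw [Finset.sum_congr rfl (fun i _ => e3 i), Finset.sum_eq_single (p b.1)]
        · rw [if_pos (hp b.1), mul_div_cancel₀]
          exact ne_of_gt (hm0 _)
        · intro j _ hj
          refine if_neg (fun hmem => hj ?_)
          exact (hpeq b.1 j hmem).symm
        · intro h; exact absurd (Finset.mem_univ _) h
      rw [e1, e2]
      norm_num
    · rw [Fintype.sum_sum_type]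
      have e1 : ∑ t : {v // v ∈ V2}, Wt H V1 V2 Abar w p m (.inl t) (.inr jl) =
          RT H V2 Abar w jl.1 / m jl.1 := by
        simp only [Wt]
        rw [Finset.univ_eq_attach,
          Finset.sum_attach V2 (fun v => if jl.1 = p v then (1 - vertWeight H w v) / (m jl.1) else 0)]
        exact hfibT jl.1
      have e2 : ∑ ik : Σ i : Fin s, Fin (m i), Wt H V1 V2 Abar w p m (.inr ik) (.inr jl) =
          1 - (max (RT H V2 Abar w jl.1) (RB H V1 Abar w jl.1)) / m jl.1 := by
        simp only [Wt]
        rw [Finset.sum_ite_eq Finset.univ jl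
          (fun ik => 1 - (max (RT H V2 Abar w ik.1) (RB H V1 Abar w ik.1)) / m ik.1)]
        simp
      rw [e1, e2]
      have h1 : RT H V2 Abar w jl.1 / (m jl.1 : ℝ) ≤
          (max (RT H V2 Abar w jl.1) (RB H V1 Abar w jl.1)) / m jl.1 := by
        have hpos := hm0 jl.1
        gcongr
        exact le_max_left _ _
      linarith
  -- Hall's condition
  have hHall : ∀ S : Finset ({v // v ∈ V2} ⊕ (Σ i : Fin s, Fin (m i))),
      S.card ≤ (S.biUnion (nbr H V1 V2 Abar p m)).card := by
    intro S
    set B := S.biUnion (nbr H V1 V2 Abar p m) with hB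
    set δ : ({v // v ∈ V2} ⊕ (Σ i : Fin s, Fin (m i))) → ℝ :=
      Sum.elim (fun _ => (0 : ℝ))
        (fun ik => (max (RT H V2 Abar w ik.1) (RB H V1 Abar w ik.1) -
          RB H V1 Abar w ik.1) / m ik.1) with hδ
    have hδ0 : ∀ x, 0 ≤ δ x := by
      rintro (t | ik)
      · simp [hδ]
      · simp only [hδ, Sum.elim_inr]
        refine div_nonneg ?_ (le_of_lt (hm0 _))
        have := le_max_right (RT H V2 Abar w ik.1) (RB H V1 Abar w ik.1)
        linarith
    have hδtot : ∑ x, δ x ≤ 0.9 := by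
      rw [Fintype.sum_sum_type]
      simp only [hδ, Sum.elim_inl, Sum.elim_inr, Finset.sum_const_zero, zero_add]
      rw [← Finset.univ_sigma_univ, Finset.sum_sigma]
      have e : ∀ i : Fin s, (∑ _k : Fin (m i),
          (max (RT H V2 Abar w i) (RB H V1 Abar w i) - RB H V1 Abar w i) / (m i : ℝ)) =
          max (RT H V2 Abar w i) (RB H V1 Abar w i) - RB H V1 Abar w i := by
        intro i
        rw [Finset.sum_const, Finset.card_univ, Fintype.card_fin, nsmul_eq_mul,
          mul_div_cancel₀]
        exact ne_of_gt (hm0 _)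
      rw [Finset.sum_congr rfl (fun i _ => e i)]
      exact hRdiff
    have hrowδ : ∀ x, ∑ y, Wt H V1 V2 Abar w p m x y = 1 - δ x := by
      rintro (t | ik)
      · simp only [hδ, Sum.elim_inl, sub_zero]; exact hrowl t
      · simp only [hδ, Sum.elim_inr]; exact hrowr ik
    have key : (S.card : ℝ) - 0.9 ≤ (B.card : ℝ) := by
      have c1 : (S.card : ℝ) - 0.9 ≤ ∑ x ∈ S, ∑ y, Wt H V1 V2 Abar w p m x y := by
        rw [Finset.sum_congr rfl (fun x _ => hrowδ x), Finset.sum_sub_distrib,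
          Finset.sum_const, nsmul_eq_mul, mul_one]
        have h := Finset.sum_le_sum_of_subset_of_nonneg (Finset.subset_univ S)
          (fun x _ _ => hδ0 x)
        linarith
      have c2 : ∑ x ∈ S, ∑ y, Wt H V1 V2 Abar w p m x y =
          ∑ x ∈ S, ∑ y ∈ nbr H V1 V2 Abar p m x, Wt H V1 V2 Abar w p m x y :=
        Finset.sum_congr rfl (fun x _ =>
          (Finset.sum_subset (Finset.subset_univ _) (fun y _ hy => hsupp x y hy)).symm)
      have c3 : ∑ x ∈ S, ∑ y ∈ nbr H V1 V2 Abar p m x, Wt H V1 V2 Abar w p m x y ≤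
          ∑ x ∈ S, ∑ y ∈ B, Wt H V1 V2 Abar w p m x y :=
        Finset.sum_le_sum (fun x hx => Finset.sum_le_sum_of_subset_of_nonneg
          (Finset.subset_biUnion_of_mem _ hx) (fun y _ _ => hWnn x y))
      have c4 : ∑ x ∈ S, ∑ y ∈ B, Wt H V1 V2 Abar w p m x y ≤
          ∑ x, ∑ y ∈ B, Wt H V1 V2 Abar w p m x y :=
        Finset.sum_le_sum_of_subset_of_nonneg (Finset.subset_univ S)
          (fun x _ _ => Finset.sum_nonneg (fun y _ => hWnn x y))
      have c5 : ∑ x, ∑ y ∈ B, Wt H V1 V2 Abar w p m x y =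
          ∑ y ∈ B, ∑ x, Wt H V1 V2 Abar w p m x y := Finset.sum_comm
      have c6 : ∑ y ∈ B, ∑ x, Wt H V1 V2 Abar w p m x y ≤ ∑ _y ∈ B, (1 : ℝ) :=
        Finset.sum_le_sum (fun y _ => hcol y)
      have c7 : ∑ _y ∈ B, (1 : ℝ) = B.card := by simp
      linarith
    have hlt : (S.card : ℝ) < (B.card : ℝ) + 1 := by linarith
    exact Nat.lt_succ_iff.1 (by exact_mod_cast hlt)
  obtain ⟨f, hfinj, hft⟩ :=
    (Finset.all_card_le_biUnion_card_iff_exists_injective (nbr H V1 V2 Abar p m)).1 hHall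
  have hfbij : Function.Bijective f := by
    refine (Fintype.bijective_iff_injective_and_card f).2 ⟨hfinj, ?_⟩
    simp [Fintype.card_sum, Fintype.card_coe, hcards]
  -- structure of f on the two sides
  have hfl : ∀ t : {v // v ∈ V2},
      (∃ b : {v // v ∈ V1}, f (.inl t) = .inl b ∧ H.Adj t.1 b.1) ∨
      (∃ k : Fin (m (p t.1)), f (.inl t) = .inr ⟨p t.1, k⟩) := by
    intro t
    have h := hft (.inl t)
    simp only [nbr] at h
    rcases Finset.mem_union.1 h with h1 | h1
    · obtain ⟨b, hb, heq⟩ := Finset.mem_image.1 h1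
      exact Or.inl ⟨b, heq.symm, (Finset.mem_filter.1 hb).2⟩
    · obtain ⟨k, _, heq⟩ := Finset.mem_image.1 h1
      exact Or.inr ⟨k, heq.symm⟩
  have hfr : ∀ ik : Σ i : Fin s, Fin (m i),
      (∃ b : {v // v ∈ V1}, f (.inr ik) = .inl b ∧ b.1 ∈ Abar ik.1) ∨ f (.inr ik) = .inr ik := by
    intro ik
    have h := hft (.inr ik)
    simp only [nbr] at h
    rcases Finset.mem_union.1 h with h1 | h1
    · obtain ⟨b, hb, heq⟩ := Finset.mem_image.1 h1
      exact Or.inl ⟨b, heq.symm, (Finset.mem_filter.1 hb).2⟩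
    · exact Or.inr (Finset.mem_singleton.1 h1)
  -- the covered vertices
  set cov : Finset V := Finset.univ.filter (fun v =>
      (∃ (h : v ∈ V2) (b : {v // v ∈ V1}), f (.inl ⟨v, h⟩) = .inl b) ∨
      (∃ (h : v ∈ V1) (t : {v // v ∈ V2}), f (.inl t) = .inl ⟨v, h⟩)) with hcovdef
  have hmemcov : ∀ v : V, v ∈ cov ↔
      ((∃ (h : v ∈ V2) (b : {v // v ∈ V1}), f (.inl ⟨v, h⟩) = .inl b) ∨
      (∃ (h : v ∈ V1) (t : {v // v ∈ V2}), f (.inl t) = .inl ⟨v, h⟩)) := by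
    intro v
    rw [hcovdef, Finset.mem_filter]
    exact ⟨fun h => h.2, fun h => ⟨Finset.mem_univ v, h⟩⟩
  -- the matching as a subgraph
  set MAdj : V → V → Prop := fun u v =>
    (∃ (hu : u ∈ V2) (hv : v ∈ V1), f (.inl ⟨u, hu⟩) = .inl ⟨v, hv⟩) ∨
    (∃ (hv : v ∈ V2) (hu : u ∈ V1), f (.inl ⟨v, hv⟩) = .inl ⟨u, hu⟩) with hMAdjdef
  have hMadjH : ∀ u v, MAdj u v → H.Adj u v := by
    intro u v h
    rw [hMAdjdef] at h
    rcases h with ⟨hu, hv, heq⟩ | ⟨hv, hu, heq⟩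
    · rcases hfl ⟨u, hu⟩ with ⟨b, hb1, hb2⟩ | ⟨k, hk⟩
      · have hbe : (⟨v, hv⟩ : {v // v ∈ V1}) = b := Sum.inl.inj (heq.symm.trans hb1)
        rw [← hbe] at hb2
        exact hb2
      · exact absurd (heq.symm.trans hk) (by simp)
    · rcases hfl ⟨v, hv⟩ with ⟨b, hb1, hb2⟩ | ⟨k, hk⟩
      · have hbe : (⟨u, hu⟩ : {v // v ∈ V1}) = b := Sum.inl.inj (heq.symm.trans hb1)
        rw [← hbe] at hb2
        exact H.adj_symm hb2
      · exact absurd (heq.symm.trans hk) (by simp)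
  have hMadjcov : ∀ u v, MAdj u v → u ∈ cov := by
    intro u v h
    rw [hMAdjdef] at h
    rcases h with ⟨hu, hv, heq⟩ | ⟨hv, hu, heq⟩
    · exact (hmemcov u).2 (Or.inl ⟨hu, ⟨v, hv⟩, heq⟩)
    · exact (hmemcov u).2 (Or.inr ⟨hu, ⟨v, hv⟩, heq⟩)
  set M : H.Subgraph :=
    { verts := ↑cov
      Adj := MAdj
      adj_sub := fun h => hMadjH _ _ h
      edge_vert := fun h => hMadjcov _ _ h
      symm := ⟨fun u v h => by
        rcases h with h | h
        · exact Or.inr h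
        · exact Or.inl h⟩ } with hMdef
  have hMverts : M.verts = ↑cov := by rw [hMdef]
  have hMadj_iff : ∀ u v, M.Adj u v ↔ MAdj u v := by intro u v; rw [hMdef]
  refine ⟨M, ?_, ?_⟩
  · -- IsMatching
    intro v hv
    rw [hMverts, Finset.mem_coe] at hv
    rcases (hmemcov v).1 hv with ⟨h2, b, hb⟩ | ⟨h1, t, ht⟩
    · refine ⟨b.1, (hMadj_iff v b.1).2 (by rw [hMAdjdef]; exact Or.inl ⟨h2, b.2, hb⟩), ?_⟩
      intro u hu
      have hu' := (hMadj_iff v u).1 hu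
      rw [hMAdjdef] at hu'
      rcases hu' with ⟨hu2, hu1, hequ⟩ | ⟨hu2, hu1, hequ⟩
      · have : (⟨u, hu1⟩ : {v // v ∈ V1}) = b := Sum.inl.inj (hequ.symm.trans hb)
        exact congrArg Subtype.val this
      · exact absurd h2 (Finset.disjoint_left.1 hdisj hu1)
    · refine ⟨t.1, (hMadj_iff v t.1).2 (by rw [hMAdjdef]; exact Or.inr ⟨t.2, h1, ht⟩), ?_⟩
      intro u hu
      have hu' := (hMadj_iff v u).1 hu
      rw [hMAdjdef] at hu'
      rcases hu' with ⟨hu2, hu1, hequ⟩ | ⟨hu2, hu1, hequ⟩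
      · exact absurd hu2 (Finset.disjoint_left.1 hdisj h1)
      · have : (⟨u, hu2⟩ : {v // v ∈ V2}) = t :=
          Sum.inl.inj (hfinj (hequ.trans ht.symm))
        exact congrArg Subtype.val this
  · -- the balance of each part
    intro i
    have hsdT : (((Abar i ∩ V2 : Finset V) : Set V) \ M.verts) = ↑((Abar i ∩ V2) \ cov) := by
      rw [hMverts, Finset.coe_sdiff]
    have hsdB : (((Abar i ∩ V1 : Finset V) : Set V) \ M.verts) = ↑((Abar i ∩ V1) \ cov) := by
      rw [hMverts, Finset.coe_sdiff]
    rw [hsdT, hsdB, Set.ncard_coe_finset, Set.ncard_coe_finset]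
    -- both are in bijection with the used dummy slots
    have hTgetk : ∀ v (hv2 : v ∈ V2), v ∈ Abar i → v ∉ cov →
        ∃ k : Fin (m i), f (.inl ⟨v, hv2⟩) = .inr ⟨i, k⟩ := by
      intro v hv2 hvA hnc
      rcases hfl ⟨v, hv2⟩ with ⟨b, hb, _⟩ | ⟨k, hk⟩
      · exact absurd ((hmemcov v).2 (Or.inl ⟨hv2, b, hb⟩)) hnc
      · have hpv : p v = i := hpeq v i hvA
        subst hpv
        exact ⟨k, hk⟩
    have hBgetb : ∀ k : Fin (m i), f (.inr ⟨i, k⟩) ≠ .inr ⟨i, k⟩ →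
        ∃ b : {v // v ∈ V1}, f (.inr ⟨i, k⟩) = .inl b ∧ b.1 ∈ Abar i := by
      intro k hk
      rcases hfr ⟨i, k⟩ with ⟨b, hb, hbA⟩ | h
      · exact ⟨b, hb, hbA⟩
      · exact absurd h hk
    set K : Finset (Fin (m i)) :=
      Finset.univ.filter (fun k => f (.inr ⟨i, k⟩) ≠ .inr ⟨i, k⟩) with hKdef
    have hKne : ∀ k, k ∈ K → f (.inr ⟨i, k⟩) ≠ .inr ⟨i, k⟩ := by
      intro k hk
      rw [hKdef, Finset.mem_filter] at hk
      exact hk.2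
    have hKmem : ∀ k : Fin (m i), f (.inr ⟨i, k⟩) ≠ .inr ⟨i, k⟩ → k ∈ K := by
      intro k hk
      rw [hKdef, Finset.mem_filter]
      exact ⟨Finset.mem_univ _, hk⟩
    have hTK : ((Abar i ∩ V2) \ cov).card = K.card := by
      refine Finset.card_bij (fun v hv =>
        (hTgetk v (Finset.mem_inter.1 (Finset.mem_sdiff.1 hv).1).2
          (Finset.mem_inter.1 (Finset.mem_sdiff.1 hv).1).1 (Finset.mem_sdiff.1 hv).2).choose)
        ?_ ?_ ?_
      · intro v hv
        have hs := (hTgetk v (Finset.mem_inter.1 (Finset.mem_sdiff.1 hv).1).2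
          (Finset.mem_inter.1 (Finset.mem_sdiff.1 hv).1).1 (Finset.mem_sdiff.1 hv).2).choose_spec
        refine hKmem _ (fun hcontra => ?_)
        exact absurd (hfinj (hs.trans hcontra.symm)) (by simp)
      · intro v1 hv1 v2 hv2 heq
        have h1 := (hTgetk v1 (Finset.mem_inter.1 (Finset.mem_sdiff.1 hv1).1).2
          (Finset.mem_inter.1 (Finset.mem_sdiff.1 hv1).1).1 (Finset.mem_sdiff.1 hv1).2).choose_spec
        have h2 := (hTgetk v2 (Finset.mem_inter.1 (Finset.mem_sdiff.1 hv2).1).2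
          (Finset.mem_inter.1 (Finset.mem_sdiff.1 hv2).1).1 (Finset.mem_sdiff.1 hv2).2).choose_spec
        have heq' : (hTgetk v1 (Finset.mem_inter.1 (Finset.mem_sdiff.1 hv1).1).2
            (Finset.mem_inter.1 (Finset.mem_sdiff.1 hv1).1).1 (Finset.mem_sdiff.1 hv1).2).choose =
          (hTgetk v2 (Finset.mem_inter.1 (Finset.mem_sdiff.1 hv2).1).2
            (Finset.mem_inter.1 (Finset.mem_sdiff.1 hv2).1).1
            (Finset.mem_sdiff.1 hv2).2).choose := heq
        rw [heq'] at h1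
        have := Sum.inl.inj (hfinj (h1.trans h2.symm))
        exact congrArg Subtype.val this
      · intro k hk
        obtain ⟨x, hx⟩ := hfbij.2 (.inr ⟨i, k⟩)
        rcases x with t | jl
        · have htA : t.1 ∈ Abar i := by
            rcases hfl t with ⟨b, hb, _⟩ | ⟨k', hk'⟩
            · exact absurd (hb.symm.trans hx) (by simp)
            · have he : (⟨p t.1, k'⟩ : Σ j : Fin s, Fin (m j)) = ⟨i, k⟩ :=
                Sum.inr.inj (hk'.symm.trans hx)
              have hpi : p t.1 = i := congrArg Sigma.fst he
              rw [← hpi]; exact hp t.1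
          have htnc : t.1 ∉ cov := by
            intro hc
            rcases (hmemcov t.1).1 hc with ⟨h2, b, hb⟩ | ⟨h1, t', ht'⟩
            · exact absurd (hb.symm.trans hx) (by simp)
            · exact (Finset.disjoint_left.1 hdisj h1) t.2
          refine ⟨t.1, Finset.mem_sdiff.2 ⟨Finset.mem_inter.2 ⟨htA, t.2⟩, htnc⟩, ?_⟩
          show (hTgetk t.1 t.2 htA htnc).choose = k
          have hs := (hTgetk t.1 t.2 htA htnc).choose_spec
          have he : (⟨i, (hTgetk t.1 t.2 htA htnc).choose⟩ : Σ j : Fin s, Fin (m j)) =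
              ⟨i, k⟩ := Sum.inr.inj (hs.symm.trans hx)
          simpa using he
        · rcases hfr jl with ⟨b, hb, _⟩ | hid
          · exact absurd (hb.symm.trans hx) (by simp)
          · have : jl = ⟨i, k⟩ := Sum.inr.inj (hid.symm.trans hx)
            rw [this] at hid
            exact absurd hid (hKne k hk)
    have hBK : ((Abar i ∩ V1) \ cov).card = K.card := by
      refine (Finset.card_bij (fun k hk => ((hBgetb k (hKne k hk)).choose : V)) ?_ ?_ ?_).symm
      · intro k hk
        obtain ⟨hb, hbA⟩ := (hBgetb k (hKne k hk)).choose_spec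
        refine Finset.mem_sdiff.2 ⟨Finset.mem_inter.2 ⟨hbA, ((hBgetb k (hKne k hk)).choose).2⟩,
          fun hc => ?_⟩
        rcases (hmemcov _).1 hc with ⟨h2, b', hb'⟩ | ⟨h1, t, ht⟩
        · exact (Finset.disjoint_left.1 hdisj ((hBgetb k (hKne k hk)).choose).2) h2
        · exact absurd (hfinj (ht.trans hb.symm)) (by simp)
      · intro k1 hk1 k2 hk2 heq
        have h1 := (hBgetb k1 (hKne k1 hk1)).choose_spec.1
        have h2 := (hBgetb k2 (hKne k2 hk2)).choose_spec.1
        have hb12 : (hBgetb k1 (hKne k1 hk1)).choose = (hBgetb k2 (hKne k2 hk2)).choose :=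
          Subtype.ext heq
        rw [hb12] at h1
        have := Sum.inr.inj (hfinj (h1.trans h2.symm))
        simpa using this
      · intro v hv
        have hv1 : v ∈ V1 := (Finset.mem_inter.1 (Finset.mem_sdiff.1 hv).1).2
        have hvA : v ∈ Abar i := (Finset.mem_inter.1 (Finset.mem_sdiff.1 hv).1).1
        have hnc : v ∉ cov := (Finset.mem_sdiff.1 hv).2
        obtain ⟨x, hx⟩ := hfbij.2 (.inl ⟨v, hv1⟩)
        rcases x with t | jl
        · exact absurd ((hmemcov v).2 (Or.inr ⟨hv1, t, hx⟩)) hnc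
        · rcases hfr jl with ⟨b, hb, hbA⟩ | hid
          · have hbv : b = ⟨v, hv1⟩ := Sum.inl.inj (hb.symm.trans hx)
            have hvAj : v ∈ Abar jl.1 := by rw [hbv] at hbA; exact hbA
            have hj : jl.1 = i := (hpeq v jl.1 hvAj).symm.trans (hpeq v i hvA)
            obtain ⟨j, l⟩ := jl
            dsimp only at hj
            subst hj
            have hne : f (.inr ⟨j, l⟩) ≠ .inr ⟨j, l⟩ := by
              rw [hb]; simp
            refine ⟨l, hKmem l hne, ?_⟩
            show ((hBgetb l (hKne l (hKmem l hne))).choose : V) = v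
            have hcs := (hBgetb l (hKne l (hKmem l hne))).choose_spec.1
            have : (hBgetb l (hKne l (hKmem l hne))).choose = b :=
              Sum.inl.inj (hcs.symm.trans hb)
            rw [this, hbv]
          · exact absurd (hid.symm.trans hx) (by simp)
    rw [hTK, hBK]
end

section
/- For all constants c_min > 0 and δ > 0 there exists n₀ such that the following holds. Let n ≥ n₀, let G be a d-regular graph on n vertices with d ≥ c_min·n, and let V(G) be partitioned into r = ⌊n/(d+1)⌋ + 1 non-empty parts A₁, …, A_r, each of size at least δ·n. Then there exist distinct indices i, j ∈ [r] and two vertex-disjoint edges of G, each with one end in A_i and one end in A_j (i.e., a matching of size 2 between A_i and A_j). -/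
open SimpleGraph Finset

set_option maxHeartbeats 2000000 in

private lemma core_matching {V : Type} [Fintype V] [DecidableEq V] (G : SimpleGraph V)
    [DecidableRel G.Adj] (d r : ℕ) (hr : 0 < r)
    (hreg : G.IsRegularOfDegree d) (π : V → Fin r)
    (hnomatch : ∀ v₁ w₁ v₂ w₂ : V, π w₁ = π v₁ → π w₂ = π v₂ → π v₁ ≠ π v₂ →
      v₁ ≠ w₁ → v₂ ≠ w₂ → G.Adj v₁ v₂ → ¬ G.Adj w₁ w₂)
    (hsize : ∀ j : Fin r, r * r + 1 ≤ (univ.filter (fun v => π v = j)).card)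
    (hT : Fintype.card V + 1 ≤ r * (d + 1)) :
    (d : ℤ) ≤ r * ((r ^ 2 + r) * (r ^ 2 + r + 1)) := by
  classical
  have hVne : Nonempty V := by
    have h := hsize ⟨0, hr⟩
    have h2 : 0 < (univ.filter (fun v => π v = (⟨0, hr⟩ : Fin r))).card := by omega
    obtain ⟨v, _⟩ := Finset.card_pos.mp h2
    exact ⟨v⟩
  inhabit V
  -- the star lemma: all crossing edges between two parts share a vertex
  have hstar : ∀ i j : Fin r, ∃ z : V, i ≠ j →
      ∀ u w : V, π u = i → π w = j → G.Adj u w → z = u ∨ z = w := by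
    intro i j
    by_cases hij : i = j
    · exact ⟨default, fun h => absurd hij h⟩
    by_cases hE : ∃ u w : V, π u = i ∧ π w = j ∧ G.Adj u w
    · obtain ⟨u₀, w₀, hu₀, hw₀, ha₀⟩ := hE
      by_cases hall : ∀ u w : V, π u = i → π w = j → G.Adj u w → u = u₀
      · exact ⟨u₀, fun _ u w hu hw ha => Or.inl (hall u w hu hw ha).symm⟩
      push_neg at hall
      obtain ⟨u₁, w₁, hu₁, hw₁, ha₁, hne₁⟩ := hall
      have hw₁w₀ : w₁ = w₀ := by
        by_contra hne'
        exact hnomatch u₀ u₁ w₀ w₁ (hu₁.trans hu₀.symm) (hw₁.trans hw₀.symm)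
          (by rw [hu₀, hw₀]; exact hij) (fun h => hne₁ h.symm) (fun h => hne' h.symm) ha₀ ha₁
      refine ⟨w₀, fun _ u w hu hw ha => ?_⟩
      right
      by_contra hww
      have huu : u = u₀ := by
        by_contra huu
        exact hnomatch u₀ u w₀ w (hu.trans hu₀.symm) (hw.trans hw₀.symm)
          (by rw [hu₀, hw₀]; exact hij) (fun h => huu h.symm) (fun h => hww h) ha₀ ha
      exact hnomatch u₁ u w₁ w (hu.trans hu₁.symm) (hw.trans hw₁.symm)
        (by rw [hu₁, hw₁]; exact hij) (fun h => hne₁ (h.trans huu))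
        (fun h => hww (hw₁w₀.symm.trans h)) ha₁ ha
    · push_neg at hE
      exact ⟨default, fun _ u w hu hw ha => absurd ha (hE u w hu hw)⟩
  choose c hc using hstar
  set C : Finset V := Finset.image (fun p : Fin r × Fin r => c p.1 p.2) Finset.univ with hCdef
  have hcC : ∀ i j : Fin r, c i j ∈ C := fun i j =>
    Finset.mem_image.mpr ⟨(i, j), Finset.mem_univ _, rfl⟩
  have hCcard : C.card ≤ r * r := by
    calc C.card ≤ (Finset.univ : Finset (Fin r × Fin r)).card := Finset.card_image_le
    _ = r * r := by simp
  set P : Fin r → Finset V := fun j => univ.filter (fun v => π v = j) with hPdef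
  have hmemP : ∀ (v : V) (j : Fin r), v ∈ P j ↔ π v = j := by
    intro v j
    exact ⟨fun h => (Finset.mem_filter.mp h).2, fun h => Finset.mem_filter.mpr ⟨Finset.mem_univ v, h⟩⟩
  have hdeg : ∀ v : V,
      (G.neighborFinset v ∩ P (π v)).card + (G.neighborFinset v \ P (π v)).card = d := by
    intro v
    rw [Finset.card_inter_add_card_sdiff]
    exact hreg v
  have hcenter : ∀ v w : V, G.Adj v w → π v ≠ π w → v ∉ C → w = c (π v) (π w) := by
    intro v w hadj hne hvC
    rcases hc (π v) (π w) hne v w rfl rfl hadj with h | h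
    · exact absurd (h ▸ hcC (π v) (π w)) hvC
    · exact h.symm
  -- non-centers have few crossing neighbours
  have hxdeg : ∀ v : V, v ∉ C → (G.neighborFinset v \ P (π v)).card + 1 ≤ r := by
    intro v hvC
    have hle : (G.neighborFinset v \ P (π v)).card ≤ (univ.erase (π v)).card := by
      apply Finset.card_le_card_of_injOn π
      · intro w hw
        rw [Finset.mem_coe, Finset.mem_sdiff, SimpleGraph.mem_neighborFinset, hmemP] at hw
        exact Finset.mem_erase.mpr ⟨hw.2, Finset.mem_univ _⟩
      · intro w hw w' hw' hww
        simp only [Finset.coe_sdiff, Set.mem_diff, Finset.mem_coe,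
          SimpleGraph.mem_neighborFinset] at hw hw'
        have h1 : w = c (π v) (π w) :=
          hcenter v w hw.1 (fun h => hw.2 ((hmemP w (π v)).mpr h.symm)) hvC
        have h2 : w' = c (π v) (π w') :=
          hcenter v w' hw'.1 (fun h => hw'.2 ((hmemP w' (π v)).mpr h.symm)) hvC
        rw [h1, h2, hww]
    rw [Finset.card_erase_of_mem (Finset.mem_univ _), Finset.card_univ, Fintype.card_fin] at hle
    omega
  
  have hsplit : ∀ j, (P j ∩ C).card + (P j \ C).card = (P j).card :=
    fun j => Finset.card_inter_add_card_sdiff _ _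
  have hqle : ∀ j, (P j ∩ C).card ≤ r * r :=
    fun j => le_trans (Finset.card_le_card Finset.inter_subset_right) hCcard
  have hUne : ∀ j, (P j \ C).Nonempty := by
    intro j
    rw [← Finset.card_pos]
    have h3 : r * r + 1 ≤ (P j).card := hsize j
    have h1 := hsplit j
    have h2 := hqle j
    omega
  have hrwP : ∀ (j : Fin r) (v : V), v ∈ P j → P (π v) = P j := by
    intro j v hv
    rw [(hmemP v j).mp hv]
  -- every part has at least d + 2 - r vertices
  have hslow : ∀ j : Fin r, d + 2 ≤ (P j).card + r := by
    intro j
    obtain ⟨v, hv⟩ := hUne j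
    rw [Finset.mem_sdiff] at hv
    have hπv : π v = j := (hmemP v j).mp hv.1
    have h2 := hxdeg v hv.2
    have h3 := hdeg v
    have h1 : (G.neighborFinset v ∩ P (π v)).card + 1 ≤ (P j).card := by
      have hsub : G.neighborFinset v ∩ P (π v) ⊆ (P j).erase v := by
        intro w hw
        rw [Finset.mem_inter] at hw
        refine Finset.mem_erase.mpr ⟨?_, by rw [← hrwP j v hv.1]; exact hw.2⟩
        rintro rfl
        exact (by simpa using hw.1 : False)
      calc (G.neighborFinset v ∩ P (π v)).card + 1 ≤ ((P j).erase v).card + 1 :=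
            Nat.add_le_add_right (Finset.card_le_card hsub) 1
        _ = (P j).card := Finset.card_erase_add_one hv.1
    omega
  -- per-part double counting inequality
  have hF1 : ∀ j : Fin r,
      (∑ v ∈ P j ∩ C, (G.neighborFinset v \ P (π v)).card) + (P j \ C).card * d
          + (P j \ C).card ≤
      (∑ v ∈ P j \ C, (G.neighborFinset v \ P (π v)).card) + (P j ∩ C).card * d
        + (P j \ C).card * (P j \ C).card := by
    intro j
    have hinterfilter : ∀ (v : V) (T : Finset V),
        G.neighborFinset v ∩ T = T.filter (fun w => G.Adj v w) := by
      intro v T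
      ext w
      simp only [Finset.mem_inter, Finset.mem_filter, SimpleGraph.mem_neighborFinset]
      exact and_comm
    have hdc : ∑ v ∈ P j \ C, (G.neighborFinset v ∩ (P j ∩ C)).card
        = ∑ z ∈ P j ∩ C, (G.neighborFinset z ∩ (P j \ C)).card := by
      have key : ∀ (S T : Finset V), ∑ v ∈ S, (G.neighborFinset v ∩ T).card
          = ∑ v ∈ S, ∑ w ∈ T, (if G.Adj v w then 1 else 0) := by
        intro S T
        refine Finset.sum_congr rfl fun v _ => ?_
        rw [hinterfilter, Finset.card_filter]
      rw [key, key, Finset.sum_comm]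
      exact Finset.sum_congr rfl fun v _ => Finset.sum_congr rfl fun w _ =>
        if_congr (G.adj_comm w v) rfl rfl
    have hPsplit : ∀ v : V, (G.neighborFinset v ∩ P j).card
        = (G.neighborFinset v ∩ (P j \ C)).card + (G.neighborFinset v ∩ (P j ∩ C)).card := by
      intro v
      have hdisj : Disjoint (G.neighborFinset v ∩ (P j \ C)) (G.neighborFinset v ∩ (P j ∩ C)) :=
        ((Finset.sdiff_disjoint.mono_right Finset.inter_subset_right).mono
          Finset.inter_subset_right Finset.inter_subset_right)
      rw [← Finset.card_union_of_disjoint hdisj, ← Finset.inter_union_distrib_left,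
        Finset.sdiff_union_inter]
    -- A2 : neighbours inside the non-center part
    have hA2 : (∑ v ∈ P j \ C, (G.neighborFinset v ∩ (P j \ C)).card) + (P j \ C).card
        ≤ (P j \ C).card * (P j \ C).card := by
      have : ∀ v ∈ P j \ C, (G.neighborFinset v ∩ (P j \ C)).card + 1 ≤ (P j \ C).card := by
        intro v hv
        have hsub : G.neighborFinset v ∩ (P j \ C) ⊆ (P j \ C).erase v := by
          intro w hw
          rw [Finset.mem_inter] at hw
          refine Finset.mem_erase.mpr ⟨?_, hw.2⟩
          rintro rfl
          exact (by simpa using hw.1 : False)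
        calc (G.neighborFinset v ∩ (P j \ C)).card + 1 ≤ ((P j \ C).erase v).card + 1 :=
              Nat.add_le_add_right (Finset.card_le_card hsub) 1
          _ = (P j \ C).card := Finset.card_erase_add_one hv
      calc (∑ v ∈ P j \ C, (G.neighborFinset v ∩ (P j \ C)).card) + (P j \ C).card
          = ∑ v ∈ P j \ C, ((G.neighborFinset v ∩ (P j \ C)).card + 1) := by
            rw [Finset.sum_add_distrib, Finset.sum_const, smul_eq_mul, mul_one]
        _ ≤ ∑ _v ∈ P j \ C, (P j \ C).card := Finset.sum_le_sum this
        _ = (P j \ C).card * (P j \ C).card := by rw [Finset.sum_const, smul_eq_mul]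
    have hA4 : ∑ z ∈ P j ∩ C, (G.neighborFinset z ∩ (P j \ C)).card
        ≤ ∑ z ∈ P j ∩ C, (G.neighborFinset z ∩ P (π z)).card := by
      refine Finset.sum_le_sum fun z hz => Finset.card_le_card ?_
      rw [hrwP j z (Finset.mem_inter.mp hz).1]
      exact Finset.inter_subset_inter (Finset.Subset.refl _) Finset.sdiff_subset
    have hA5 : (∑ v ∈ P j \ C, (G.neighborFinset v ∩ P (π v)).card)
        + (∑ v ∈ P j \ C, (G.neighborFinset v \ P (π v)).card) = (P j \ C).card * d := by
      rw [← Finset.sum_add_distrib, Finset.sum_congr rfl (fun v _ => hdeg v),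
        Finset.sum_const, smul_eq_mul]
    have hA6 : (∑ v ∈ P j ∩ C, (G.neighborFinset v ∩ P (π v)).card)
        + (∑ v ∈ P j ∩ C, (G.neighborFinset v \ P (π v)).card) = (P j ∩ C).card * d := by
      rw [← Finset.sum_add_distrib, Finset.sum_congr rfl (fun v _ => hdeg v),
        Finset.sum_const, smul_eq_mul]
    have hA1 : ∑ v ∈ P j \ C, (G.neighborFinset v ∩ P (π v)).card
        = (∑ v ∈ P j \ C, (G.neighborFinset v ∩ (P j \ C)).card)
          + ∑ v ∈ P j \ C, (G.neighborFinset v ∩ (P j ∩ C)).card := by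
      rw [← Finset.sum_add_distrib]
      refine Finset.sum_congr rfl fun v hv => ?_
      rw [hrwP j v (Finset.mem_sdiff.mp hv).1]
      exact hPsplit v
    rw [hdc] at hA1
    linarith [hA1, hA2, hA4, hA5, hA6]
  
  -- every crossing edge has an endpoint that is a center
  set F : Finset (V × V) := univ.filter (fun p => G.Adj p.1 p.2 ∧ π p.2 ≠ π p.1) with hFdef
  have hL1 : ∀ S : Finset V, ∑ v ∈ S, (G.neighborFinset v \ P (π v)).card
      = (F.filter (fun p => p.1 ∈ S)).card := by
    intro S
    rw [Finset.card_eq_sum_card_fiberwise (f := Prod.fst) (s := F.filter (fun p => p.1 ∈ S)) (t := S)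
      (fun p hp => (Finset.mem_filter.mp (Finset.mem_coe.mp hp)).2)]
    refine Finset.sum_congr rfl fun v hv => ?_
    have hfib : (F.filter (fun p => p.1 ∈ S)).filter (fun p => p.1 = v)
        = {v} ×ˢ (G.neighborFinset v \ P (π v)) := by
      ext ⟨a, b⟩
      simp only [Finset.mem_filter, Finset.mem_product, Finset.mem_singleton, hFdef,
        Finset.mem_univ, true_and, Finset.mem_sdiff, SimpleGraph.mem_neighborFinset]
      constructor
      · rintro ⟨⟨⟨hadj, hne⟩, hS⟩, rfl⟩
        exact ⟨rfl, hadj, fun hb => hne ((hmemP b (π a)).mp hb)⟩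
      · rintro ⟨rfl, hadj, hb⟩
        exact ⟨⟨⟨hadj, fun h => hb ((hmemP b _).mpr h)⟩, hv⟩, rfl⟩
    rw [hfib, Finset.card_product, Finset.card_singleton, one_mul]
  have hswap : (F.filter (fun p => p.1 ∉ C)).card ≤ (F.filter (fun p => p.1 ∈ C)).card := by
    apply Finset.card_le_card_of_injOn (fun p => (p.2, p.1))
    · rintro ⟨a, b⟩ hp
      rw [Finset.mem_coe, Finset.mem_filter, hFdef, Finset.mem_filter] at hp
      obtain ⟨⟨-, hadj, hne⟩, haC⟩ := hp
      have hbC : b = c (π a) (π b) := hcenter a b hadj (fun h => hne h.symm) haC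
      rw [Finset.mem_coe, Finset.mem_filter, hFdef, Finset.mem_filter]
      refine ⟨⟨Finset.mem_univ _, hadj.symm, fun h => hne h.symm⟩, ?_⟩
      show b ∈ C
      rw [hbC]
      exact hcC _ _
    · intro x _ y _ h
      have h1 : x.2 = y.2 := congrArg Prod.fst h
      have h2 : x.1 = y.1 := congrArg Prod.snd h
      exact Prod.ext h2 h1
  have hF2 : (∑ v ∈ univ \ C, (G.neighborFinset v \ P (π v)).card)
      ≤ ∑ v ∈ C, (G.neighborFinset v \ P (π v)).card := by
    rw [hL1, hL1]
    have heqf : F.filter (fun p => p.1 ∈ univ \ C) = F.filter (fun p => p.1 ∉ C) :=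
      Finset.filter_congr fun p _ => by simp
    rw [heqf]
    exact hswap
  -- fiberwise decompositions
  have hfib1 : ∑ j : Fin r, ∑ v ∈ P j ∩ C, (G.neighborFinset v \ P (π v)).card
      = ∑ v ∈ C, (G.neighborFinset v \ P (π v)).card := by
    have heq : ∀ j : Fin r, P j ∩ C = C.filter (fun v => π v = j) := by
      intro j
      ext v
      simp only [Finset.mem_inter, Finset.mem_filter]
      exact ⟨fun h => ⟨h.2, (hmemP v j).mp h.1⟩, fun h => ⟨(hmemP v j).mpr h.2, h.1⟩⟩
    calc ∑ j : Fin r, ∑ v ∈ P j ∩ C, (G.neighborFinset v \ P (π v)).card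
        = ∑ j : Fin r, ∑ v ∈ C.filter (fun v => π v = j),
            (G.neighborFinset v \ P (π v)).card :=
          Finset.sum_congr rfl fun j _ => by rw [heq j]
      _ = _ := Finset.sum_fiberwise C π _
  have hfib2 : ∑ j : Fin r, ∑ v ∈ P j \ C, (G.neighborFinset v \ P (π v)).card
      = ∑ v ∈ univ \ C, (G.neighborFinset v \ P (π v)).card := by
    have heq : ∀ j : Fin r, P j \ C = (univ \ C).filter (fun v => π v = j) := by
      intro j
      ext v
      simp only [Finset.mem_sdiff, Finset.mem_filter, Finset.mem_univ, true_and]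
      exact ⟨fun h => ⟨h.2, (hmemP v j).mp h.1⟩, fun h => ⟨(hmemP v j).mpr h.2, h.1⟩⟩
    calc ∑ j : Fin r, ∑ v ∈ P j \ C, (G.neighborFinset v \ P (π v)).card
        = ∑ j : Fin r, ∑ v ∈ (univ \ C).filter (fun v => π v = j),
            (G.neighborFinset v \ P (π v)).card :=
          Finset.sum_congr rfl fun j _ => by rw [heq j]
      _ = _ := Finset.sum_fiberwise _ π _
  have hsum_s : ∑ j : Fin r, (P j).card = Fintype.card V := by
    rw [← Finset.card_univ (α := V)]
    exact (Finset.card_eq_sum_card_fiberwise (f := π) (t := univ)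
      (fun v _ => Finset.mem_univ _)).symm
  -- integer arithmetic
  have hTQ : (Fintype.card V : ℤ) + 1 ≤ (r:ℤ) * ((d:ℤ) + 1) := by exact_mod_cast hT
  have hr1 : (1:ℤ) ≤ (r:ℤ) := by exact_mod_cast hr
  have hsumZ : ∑ j : Fin r, ((P j).card:ℤ) = (Fintype.card V:ℤ) := by exact_mod_cast hsum_s
  have hupper : ∀ j : Fin r, ((P j).card : ℤ) ≤ (d:ℤ) + (r:ℤ) * r := by
    intro j
    have h1 : ∀ k ∈ (univ : Finset (Fin r)).erase j, (d:ℤ) + 2 - r ≤ ((P k).card:ℤ) := by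
      intro k _
      have h := hslow k
      have h' : (d:ℤ) + 2 ≤ ((P k).card:ℤ) + r := by exact_mod_cast h
      linarith
    have h2 := Finset.card_nsmul_le_sum _ _ _ h1
    rw [Finset.card_erase_of_mem (Finset.mem_univ _), Finset.card_univ, Fintype.card_fin,
      nsmul_eq_mul] at h2
    have hcast : ((r - 1 : ℕ) : ℤ) = (r:ℤ) - 1 := by
      have h1r : 1 ≤ r := hr
      push_cast [h1r]
      ring
    rw [hcast] at h2
    have h4 := Finset.sum_erase_add univ (fun k => ((P k).card:ℤ)) (Finset.mem_univ j)
    rw [hsumZ] at h4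
    nlinarith [h2, h4, hTQ, hr1]
  have key : (0:ℤ) ≤ ∑ j : Fin r, (((P j ∩ C).card : ℤ) * d - ((P j \ C).card:ℤ) * d
      + ((P j \ C).card:ℤ) * ((P j \ C).card:ℤ) - ((P j \ C).card:ℤ)) := by
    have e1 : ∑ j : Fin r, ∑ v ∈ P j ∩ C, ((G.neighborFinset v \ P (π v)).card:ℤ)
        = ∑ v ∈ C, ((G.neighborFinset v \ P (π v)).card:ℤ) := by exact_mod_cast hfib1
    have e2 : ∑ j : Fin r, ∑ v ∈ P j \ C, ((G.neighborFinset v \ P (π v)).card:ℤ)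
        = ∑ v ∈ univ \ C, ((G.neighborFinset v \ P (π v)).card:ℤ) := by exact_mod_cast hfib2
    have e3 : (∑ v ∈ univ \ C, ((G.neighborFinset v \ P (π v)).card:ℤ))
        ≤ ∑ v ∈ C, ((G.neighborFinset v \ P (π v)).card:ℤ) := by exact_mod_cast hF2
    have hgh : (0:ℤ) ≤ ∑ j : Fin r,
        ((∑ v ∈ P j ∩ C, ((G.neighborFinset v \ P (π v)).card:ℤ))
          - ∑ v ∈ P j \ C, ((G.neighborFinset v \ P (π v)).card:ℤ)) := by
      rw [Finset.sum_sub_distrib, e1, e2]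
      linarith
    refine le_trans hgh (Finset.sum_le_sum fun j _ => ?_)
    have h' : ((∑ v ∈ P j ∩ C, (G.neighborFinset v \ P (π v)).card : ℕ) : ℤ)
        + ((P j \ C).card:ℤ) * d + ((P j \ C).card:ℤ)
        ≤ ((∑ v ∈ P j \ C, (G.neighborFinset v \ P (π v)).card : ℕ) : ℤ)
          + ((P j ∩ C).card:ℤ) * d + ((P j \ C).card:ℤ) * ((P j \ C).card:ℤ) := by
      exact_mod_cast hF1 j
    push_cast at h' ⊢
    linarith
  have hterm : ∀ j : Fin r, (((P j ∩ C).card : ℤ) * d - ((P j \ C).card:ℤ) * d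
      + ((P j \ C).card:ℤ) * ((P j \ C).card:ℤ) - ((P j \ C).card:ℤ))
      ≤ (d:ℤ) * (((P j).card:ℤ) - d - 1)
        + ((r:ℤ)*r + r) * ((r:ℤ)*r + r + 1) := by
    intro j
    have hs : ((P j ∩ C).card:ℤ) + ((P j \ C).card:ℤ) = ((P j).card:ℤ) := by
      exact_mod_cast hsplit j
    have hl : (d:ℤ) + 2 ≤ ((P j).card:ℤ) + r := by exact_mod_cast hslow j
    have hu := hupper j
    have hq : ((P j ∩ C).card:ℤ) ≤ (r:ℤ)*r := by exact_mod_cast hqle j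
    have hq0 : (0:ℤ) ≤ ((P j ∩ C).card:ℤ) := Int.ofNat_nonneg _
    have hA1 : ((P j \ C).card:ℤ) - d ≤ (r:ℤ)*r := by linarith
    have hA2 : -((r:ℤ)*r + (r:ℤ)) ≤ ((P j \ C).card:ℤ) - d := by linarith
    nlinarith [mul_nonneg (by linarith : (0:ℤ) ≤ (r:ℤ)*r + r - (((P j \ C).card:ℤ) - d))
      (by linarith : (0:ℤ) ≤ (r:ℤ)*r + r + (((P j \ C).card:ℤ) - d)), hs]
  have hsum_term : ∑ j : Fin r, ((d:ℤ) * (((P j).card:ℤ) - d - 1)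
        + ((r:ℤ)*r + r) * ((r:ℤ)*r + r + 1))
      = (d:ℤ) * ((Fintype.card V:ℤ) - r * (d+1))
        + (r:ℤ) * (((r:ℤ)*r + r) * ((r:ℤ)*r + r + 1)) := by
    rw [Finset.sum_add_distrib, Finset.sum_const, Finset.card_univ, Fintype.card_fin,
      nsmul_eq_mul, ← Finset.mul_sum]
    congr 1
    rw [Finset.sum_sub_distrib, Finset.sum_sub_distrib, Finset.sum_const, Finset.sum_const,
      Finset.card_univ, Fintype.card_fin, hsumZ, nsmul_eq_mul, nsmul_eq_mul]
    ring
  have final : (0:ℤ) ≤ (d:ℤ) * ((Fintype.card V:ℤ) - r*(d+1))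
      + (r:ℤ) * (((r:ℤ)*r + r) * ((r:ℤ)*r + r + 1)) := by
    calc (0:ℤ) ≤ _ := key
    _ ≤ ∑ j : Fin r, ((d:ℤ) * (((P j).card:ℤ) - d - 1)
        + ((r:ℤ)*r + r) * ((r:ℤ)*r + r + 1)) := Finset.sum_le_sum fun j _ => hterm j
    _ = _ := hsum_term
  have hd0 : (0:ℤ) ≤ (d:ℤ) := Int.ofNat_nonneg d
  have hstep : (d:ℤ) * ((Fintype.card V:ℤ) - r*(d+1)) ≤ -(d:ℤ) := by
    nlinarith [hTQ, hd0]
  nlinarith [final, hstep]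


set_option maxHeartbeats 2000000 in
/-- **A matching of size 2 between two clusters** (from the proof of Theorem 1.1):
if the vertex set of a dense regular graph is partitioned into `⌊n/(d+1)⌋ + 1` non-empty
parts, each of linear size, then some two distinct parts are joined by two vertex-disjoint
edges. -/
theorem matching_of_size_two_between_clusters :
    ∀ c_min δ : ℝ, 0 < c_min → 0 < δ →
    ∃ n₀ : ℕ, ∀ n : ℕ, n₀ ≤ n →
    ∀ (V : Type) [Fintype V] (G : SimpleGraph V) [DecidableRel G.Adj] (d : ℕ),
      Fintype.card V = n → G.IsRegularOfDegree d → c_min * n ≤ (d : ℝ) →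
    ∀ A : Fin (n / (d + 1) + 1) → Set V,
      (∀ i, (A i).Nonempty) →
      Pairwise (fun i j => Disjoint (A i) (A j)) →
      (⋃ i, A i) = Set.univ →
      (∀ i, δ * n ≤ ((A i).ncard : ℝ)) →
    ∃ i j : Fin (n / (d + 1) + 1), i ≠ j ∧
      ∃ x₁ ∈ A i, ∃ y₁ ∈ A i, ∃ x₂ ∈ A j, ∃ y₂ ∈ A j,
        x₁ ≠ y₁ ∧ x₂ ≠ y₂ ∧ G.Adj x₁ x₂ ∧ G.Adj y₁ y₂ := by
  intro c_min δ hc hδ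
  classical
  set R : ℕ := ⌈1 / c_min⌉₊ + 2 with hRdef
  set B : ℕ := R * ((R ^ 2 + R) * (R ^ 2 + R + 1)) with hBdef
  refine ⟨max (⌈((B : ℝ) + 1) / c_min⌉₊ + 1) (⌈((R * R + 1 : ℕ) : ℝ) / δ⌉₊ + 1), ?_⟩
  intro n hn V _ G _ d hcard hreg hd
  set r : ℕ := n / (d + 1) + 1 with hrdef
  intro A hAne hdisj hcover hsizes
  by_contra hcon
  push_neg at hcon
  -- basic facts
  have hn1 : 1 ≤ n := le_trans (le_trans (by omega) (le_max_left _ _)) hn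
  have hnR : (0:ℝ) < n := by exact_mod_cast hn1
  -- the partition index map
  have hmem : ∀ v : V, ∃ i, v ∈ A i := by
    intro v
    have hv : v ∈ ⋃ i, A i := hcover ▸ Set.mem_univ v
    simpa using hv
  choose π hπ using hmem
  have hπeq : ∀ (v : V) (i), v ∈ A i → π v = i := by
    intro v i hv
    by_contra hne'
    exact Set.disjoint_left.mp (hdisj hne') (hπ v) hv
  have hfib : ∀ i, A i = ↑(Finset.univ.filter (fun v => π v = i)) := by
    intro i
    ext v
    simp only [Finset.coe_filter, Set.mem_setOf_eq, Finset.mem_univ, true_and]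
    exact ⟨hπeq v i, fun h => h ▸ hπ v⟩
  -- r is bounded by R
  have hrR : r ≤ R := by
    have h1 : ((n / (d + 1) : ℕ) : ℝ) ≤ (n : ℝ) / ((d:ℝ) + 1) := by
      have h := Nat.cast_div_le (α := ℝ) (m := n) (n := d + 1)
      push_cast at h
      exact h
    have h2 : (n : ℝ) / ((d:ℝ) + 1) ≤ (n:ℝ) / (c_min * n) := by
      apply div_le_div_of_nonneg_left (by positivity) (by positivity)
      linarith
    have h3 : (n:ℝ) / (c_min * n) = 1 / c_min := by
      rw [mul_comm, ← div_div, div_self (ne_of_gt hnR)]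
    have h4 : ((n / (d + 1) : ℕ) : ℝ) ≤ ((⌈1 / c_min⌉₊ : ℕ) : ℝ) :=
      le_trans h1 (le_trans h2 (h3 ▸ Nat.le_ceil _))
    have h5 : n / (d + 1) ≤ ⌈1 / c_min⌉₊ := by exact_mod_cast h4
    omega
  -- hypotheses of the core lemma
  have hT : Fintype.card V + 1 ≤ r * (d + 1) := by
    rw [hcard]
    have h1 := Nat.div_add_mod n (d + 1)
    have h2 : n % (d + 1) < d + 1 := Nat.mod_lt _ (by omega)
    have h3 : r * (d + 1) = (d + 1) * (n / (d + 1)) + (d + 1) := by rw [hrdef]; ring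
    rw [h3]
    omega
  have hnomatch : ∀ v₁ w₁ v₂ w₂ : V, π w₁ = π v₁ → π w₂ = π v₂ → π v₁ ≠ π v₂ →
      v₁ ≠ w₁ → v₂ ≠ w₂ → G.Adj v₁ v₂ → ¬ G.Adj w₁ w₂ := by
    intro v₁ w₁ v₂ w₂ h1 h2 hne h3 h4 hadj
    exact hcon (π v₁) (π v₂) hne v₁ (hπ v₁) w₁ (h1 ▸ hπ w₁) v₂ (hπ v₂) w₂ (h2 ▸ hπ w₂)
      h3 h4 hadj
  have hsize : ∀ j : Fin r, r * r + 1 ≤ (Finset.univ.filter (fun v => π v = j)).card := by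
    intro j
    have h1 : ((R * R + 1 : ℕ) : ℝ) ≤ δ * n := by
      have h2 : ((R * R + 1 : ℕ) : ℝ) / δ ≤ (⌈((R * R + 1 : ℕ) : ℝ) / δ⌉₊ : ℝ) := Nat.le_ceil _
      have h3 : (⌈((R * R + 1 : ℕ) : ℝ) / δ⌉₊ : ℕ) ≤ n :=
        le_trans (by omega) (le_trans (le_max_right _ _) hn)
      have h4 : ((⌈((R * R + 1 : ℕ) : ℝ) / δ⌉₊ : ℕ) : ℝ) ≤ (n:ℝ) := by exact_mod_cast h3
      have h5 : ((R * R + 1 : ℕ) : ℝ) / δ ≤ (n:ℝ) := le_trans h2 h4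
      calc ((R * R + 1 : ℕ) : ℝ) = (((R * R + 1 : ℕ) : ℝ) / δ) * δ := by
            field_simp
        _ ≤ (n:ℝ) * δ := by apply mul_le_mul_of_nonneg_right h5 (le_of_lt hδ)
        _ = δ * n := by ring
    have h6 : ((R * R + 1 : ℕ) : ℝ) ≤ (((A j).ncard : ℕ) : ℝ) := le_trans h1 (hsizes j)
    have h7 : R * R + 1 ≤ (A j).ncard := by exact_mod_cast h6
    have h8 : (A j).ncard = (Finset.univ.filter (fun v => π v = j)).card := by
      rw [hfib j, Set.ncard_coe_finset]
    have h9 : r * r ≤ R * R := Nat.mul_le_mul hrR hrR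
    omega
  have hcore := core_matching G d r (Nat.succ_pos _) hreg π hnomatch hsize hT
  -- contradiction with d ≥ c_min * n
  have hmono : r * ((r ^ 2 + r) * (r ^ 2 + r + 1)) ≤ B := by
    rw [hBdef]
    have h2 : r ^ 2 ≤ R ^ 2 := Nat.pow_le_pow_left hrR 2
    exact Nat.mul_le_mul hrR (Nat.mul_le_mul (by omega) (by omega))
  have hdB : (d : ℤ) ≤ (B : ℤ) := le_trans hcore (by exact_mod_cast hmono)
  have hdB' : (d : ℝ) ≤ (B : ℝ) := by exact_mod_cast hdB
  -- but c_min * n ≥ B + 1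
  have h1 : ((B : ℝ) + 1) / c_min ≤ (⌈((B : ℝ) + 1) / c_min⌉₊ : ℝ) := Nat.le_ceil _
  have h2 : (⌈((B : ℝ) + 1) / c_min⌉₊ : ℕ) ≤ n :=
    le_trans (by omega) (le_trans (le_max_left _ _) hn)
  have h3 : ((B : ℝ) + 1) / c_min ≤ (n : ℝ) := le_trans h1 (by exact_mod_cast h2)
  have h4 : (B : ℝ) + 1 ≤ c_min * n := by
    calc (B : ℝ) + 1 = (((B : ℝ) + 1) / c_min) * c_min := by field_simp
      _ ≤ (n:ℝ) * c_min := mul_le_mul_of_nonneg_right h3 (le_of_lt hc)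
      _ = c_min * n := by ring
  linarith [hd, hdB', h4]
end
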